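/- The injective dimension satisfies ID(3) = 1, ID(4) = ID(5) = 2, ID(6) = ID(7) = ID(8) = 3, and ID(n) ≥ 3 for all n ≥ 9. -/

import Mathlib

namespace InjectiveSplitSystems

open Finset

variable {α : Type*} [DecidableEq α]

/-- A split of `X`: an unordered bipartition of `X` into two nonempty disjoint parts,
represented as the two-element set `{A, B}` of its parts. -/
def IsSplit (X : Finset α) (S : Finset (Finset α)) : Prop :=
  ∃ A B : Finset α, S = {A, B} ∧ A ∪ B = X ∧ A ∩ B = ∅ ∧ A ≠ ∅ ∧ B ≠ ∅

/-- `S` is an `r`-split of `X`: a split of `X` whose minimum part size is `r`. -/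
def IsRSplit (X : Finset α) (r : ℕ) (S : Finset (Finset α)) : Prop :=
  IsSplit X S ∧ (∃ A ∈ S, A.card = r) ∧ ∀ A ∈ S, r ≤ A.card

/-- A split system on `X`: a set of splits of `X` containing all trivial splits
`{x} | X \ {x}`, `x ∈ X`. -/
def IsSplitSystem (X : Finset α) (𝒮 : Finset (Finset (Finset α))) : Prop :=
  (∀ S ∈ 𝒮, IsSplit X S) ∧ ∀ x ∈ X, ({{x}, X \ {x}} : Finset (Finset α)) ∈ 𝒮

/-- `phiNe Y Y' S` says `φ_Y(S) ≠ φ_{Y'}(S)`: the part of `S` containing at least two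
elements of the 3-set `Y` differs from the part of `S` containing at least two
elements of the 3-set `Y'`. -/
def phiNe (Y Y' : Finset α) (S : Finset (Finset α)) : Prop :=
  ∃ t ∈ S, ∃ t' ∈ S, t ≠ t' ∧ 2 ≤ (Y ∩ t).card ∧ 2 ≤ (Y' ∩ t').card

/-- A split system on `X` is injective if for all distinct 3-subsets `Y`, `Y'` of `X`
there is a split `S ∈ 𝒮` with `φ_Y(S) ≠ φ_{Y'}(S)`. -/
def IsInjective (X : Finset α) (𝒮 : Finset (Finset (Finset α))) : Prop :=
  ∀ Y Y' : Finset α, Y ⊆ X → Y' ⊆ X → Y.card = 3 → Y'.card = 3 → Y ≠ Y' →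
    ∃ S ∈ 𝒮, phiNe Y Y' S

/-- The restriction `S|_Y` of a split to `Y`, as the set of restricted parts. -/
def restrictSplit (S : Finset (Finset α)) (Y : Finset α) : Finset (Finset α) :=
  S.image (· ∩ Y)

open scoped Classical in
/-- The restriction `𝒮|_Y` of a split system to `Y`: all splits
`(A ∩ Y) | (B ∩ Y)` with `A|B ∈ 𝒮` and both intersections nonempty. -/
noncomputable def restrictSS (𝒮 : Finset (Finset (Finset α))) (Y : Finset α) :
    Finset (Finset (Finset α)) :=
  (𝒮.image fun S => restrictSplit S Y).filter fun T => ∀ t ∈ T, t ≠ ∅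

/-- `𝒮` 4-dices `X`. -/
def FourDices (X : Finset α) (𝒮 : Finset (Finset (Finset α))) : Prop :=
  X.card < 4 ∨ ∀ Y ⊆ X, Y.card = 4 →
    ∃ 𝒯 ⊆ restrictSS 𝒮 Y, 2 ≤ 𝒯.card ∧ ∀ S ∈ 𝒯, IsRSplit Y 2 S

/-- `𝒮` 5-dices `X`. -/
def FiveDices (X : Finset α) (𝒮 : Finset (Finset (Finset α))) : Prop :=
  X.card < 5 ∨ ∀ Y ⊆ X, Y.card = 5 →
    ∃ 𝒯 ⊆ restrictSS 𝒮 Y, 5 ≤ 𝒯.card ∧ ∀ S ∈ 𝒯, IsRSplit Y 2 S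

/-- `𝒮` 6-dices `X`: every 6-subset restriction contains a 3-split or a triangle
of 2-splits. -/
def SixDices (X : Finset α) (𝒮 : Finset (Finset (Finset α))) : Prop :=
  X.card < 6 ∨ ∀ Y ⊆ X, Y.card = 6 →
    (∃ S ∈ restrictSS 𝒮 Y, IsRSplit Y 3 S) ∨
    (∃ x ∈ Y, ∃ y ∈ Y, ∃ z ∈ Y, x ≠ y ∧ x ≠ z ∧ y ≠ z ∧
      ({{x, y}, Y \ {x, y}} : Finset (Finset α)) ∈ restrictSS 𝒮 Y ∧
      ({{x, z}, Y \ {x, z}} : Finset (Finset α)) ∈ restrictSS 𝒮 Y ∧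
      ({{y, z}, Y \ {y, z}} : Finset (Finset α)) ∈ restrictSS 𝒮 Y)

/-- Two splits are incompatible if they are distinct and all four pairwise
intersections of their parts are nonempty. -/
def Incompatible (S T : Finset (Finset α)) : Prop :=
  S ≠ T ∧ ∀ A ∈ S, ∀ B ∈ T, A ∩ B ≠ ∅

open scoped Classical in
/-- The dimension of a split system: maximum size of a pairwise incompatible subset
(which is `1` when all splits are pairwise compatible and `𝒮` is nonempty). -/
noncomputable def dimSS (𝒮 : Finset (Finset (Finset α))) : ℕ :=
  (𝒮.powerset.filter fun 𝒯 => ∀ S ∈ 𝒯, ∀ T ∈ 𝒯, S ≠ T → Incompatible S T).sup Finset.card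

/-- The injective dimension `ID(n)`: minimum dimension of an injective split system
on `{1, …, n}`. -/
noncomputable def ID (n : ℕ) : ℕ :=
  sInf {d : ℕ | ∃ 𝒮 : Finset (Finset (Finset ℕ)),
    IsSplitSystem (Finset.Icc 1 n) 𝒮 ∧ IsInjective (Finset.Icc 1 n) 𝒮 ∧ dimSS 𝒮 = d}

/-- The injective 2-split dimension `ID₂(n)`: minimum dimension of an injective split
system on `{1, …, n}` all of whose non-trivial splits have size 2. -/
noncomputable def ID2 (n : ℕ) : ℕ :=
  sInf {d : ℕ | ∃ 𝒮 : Finset (Finset (Finset ℕ)),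
    IsSplitSystem (Finset.Icc 1 n) 𝒮 ∧ IsInjective (Finset.Icc 1 n) 𝒮 ∧
    (∀ S ∈ 𝒮, IsRSplit (Finset.Icc 1 n) 1 S ∨ IsRSplit (Finset.Icc 1 n) 2 S) ∧
    dimSS 𝒮 = d}

/-- `𝒮` is rooted-injective relative to `r`. -/
def IsRootedInjective (X : Finset α) (r : α) (𝒮 : Finset (Finset (Finset α))) : Prop :=
  ∀ Z Z' : Finset α, Z ⊆ X \ {r} → Z' ⊆ X \ {r} → Z.card = 2 → Z'.card = 2 → Z ≠ Z' →
    ∃ S ∈ 𝒮, phiNe (insert r Z) (insert r Z') S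

/-- The rooted-injective dimension `ID^r(n)`: minimum dimension of a split system on an
`n`-element set that is rooted-injective relative to a given element. -/
noncomputable def IDr (n : ℕ) : ℕ :=
  sInf {d : ℕ | ∃ 𝒮 : Finset (Finset (Finset ℕ)),
    IsSplitSystem (Finset.Icc 1 n) 𝒮 ∧ IsRootedInjective (Finset.Icc 1 n) 1 𝒮 ∧
    dimSS 𝒮 = d}

/-- `𝒮` is circular: there is a labelling `x_1, …, x_n` of `X` such that every split
of `𝒮` has the form `{x_i, …, x_j} | complement`. -/
def IsCircular (X : Finset α) (𝒮 : Finset (Finset (Finset α))) : Prop :=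
  ∃ f : ℕ → α, Set.InjOn f ↑(Finset.Icc 1 X.card) ∧
    (Finset.Icc 1 X.card).image f = X ∧
    ∀ S ∈ 𝒮, ∃ i j : ℕ, 1 ≤ i ∧ i ≤ j ∧ j ≤ X.card ∧
      S = {(Finset.Icc i j).image f, X \ (Finset.Icc i j).image f}

/-- `𝒮` is maximal circular: circular and not properly contained in any circular
split system on `X`. -/
def IsMaximalCircular (X : Finset α) (𝒮 : Finset (Finset (Finset α))) : Prop :=
  IsCircular X 𝒮 ∧ ∀ 𝒮' : Finset (Finset (Finset α)),
    IsSplitSystem X 𝒮' → IsCircular X 𝒮' → 𝒮 ⊆ 𝒮' → 𝒮' = 𝒮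

/-- The degree of `x` in the graph `P(𝒮)` on vertex set `X` whose edges are the
pairs `{x, y}` with `xy | X − {x,y} ∈ 𝒮`. -/
def degP (X : Finset α) (𝒮 : Finset (Finset (Finset α))) (x : α) : ℕ :=
  ((X \ {x}).filter fun y => ({{x, y}, X \ {x, y}} : Finset (Finset α)) ∈ 𝒮).card

/-- `P(𝒮)` contains a 3-clique. -/
def HasTriangle (X : Finset α) (𝒮 : Finset (Finset (Finset α))) : Prop :=
  ∃ x ∈ X, ∃ y ∈ X, ∃ z ∈ X, x ≠ y ∧ x ≠ z ∧ y ≠ z ∧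
    ({{x, y}, X \ {x, y}} : Finset (Finset α)) ∈ 𝒮 ∧
    ({{x, z}, X \ {x, z}} : Finset (Finset α)) ∈ 𝒮 ∧
    ({{y, z}, X \ {y, z}} : Finset (Finset α)) ∈ 𝒮

/-- Conditions (B1) and (B2) for a map to be a vertex of the Buneman graph. -/
def IsBunemanVertex (𝒮 : Finset (Finset (Finset α))) (φ : {S // S ∈ 𝒮} → Finset α) : Prop :=
  (∀ S, φ S ∈ S.1) ∧ ∀ S S', S ≠ S' → (φ S ∩ φ S').Nonempty

/-- The vertex set of the Buneman graph `B(𝒮)`. -/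
abbrev BunemanVertex (𝒮 : Finset (Finset (Finset α))) : Type _ :=
  {φ : {S // S ∈ 𝒮} → Finset α // IsBunemanVertex 𝒮 φ}

/-- The Buneman graph `B(𝒮)`: two vertices are adjacent iff they differ on exactly
one split. -/
def BunemanGraph (𝒮 : Finset (Finset (Finset α))) : SimpleGraph (BunemanVertex 𝒮) where
  Adj φ ψ := ∃! S, φ.1 S ≠ ψ.1 S
  symm := by
    constructor
    rintro φ ψ ⟨S, hS, hU⟩
    exact ⟨S, hS.symm, fun T hT => hU T hT.symm⟩
  loopless := by
    constructor
    rintro φ ⟨S, hS, -⟩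
    exact hS rfl

/-- `m` is a median of `u`, `v`, `w` in the graph `G`. -/
def IsMedian {V : Type*} (G : SimpleGraph V) (u v w m : V) : Prop :=
  G.dist u m + G.dist m v = G.dist u v ∧
  G.dist v m + G.dist m w = G.dist v w ∧
  G.dist u m + G.dist m w = G.dist u w


/-! ### Auxiliary machinery for Statement 16 -/

section Statement16Aux

open Finset

instance decPhiNe (Y Y' : Finset ℕ) (S : Finset (Finset ℕ)) : Decidable (phiNe Y Y' S) := by
  unfold phiNe; infer_instance

instance decIncompatible (S T : Finset (Finset ℕ)) : Decidable (Incompatible S T) := by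
  unfold Incompatible; infer_instance

/-- Build a split from its smaller part. -/
def mkS (X A : Finset ℕ) : Finset (Finset ℕ) := {A, X \ A}

lemma isSplit_mkS {X A : Finset ℕ} (h1 : A ⊆ X) (h2 : A ≠ ∅) (h3 : X \ A ≠ ∅) :
    IsSplit X (mkS X A) :=
  ⟨A, X \ A, rfl, Finset.union_sdiff_of_subset h1, Finset.inter_sdiff_self _ _, h2, h3⟩

lemma isSplitSystem_image {n : ℕ} {F : Finset (Finset ℕ)}
    (h1 : ∀ A ∈ F, A ⊆ Finset.Icc 1 n ∧ A ≠ ∅ ∧ Finset.Icc 1 n \ A ≠ ∅)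
    (h2 : ∀ x ∈ Finset.Icc 1 n, {x} ∈ F) :
    IsSplitSystem (Finset.Icc 1 n) (F.image (mkS (Finset.Icc 1 n))) := by
  constructor
  · intro S hS
    obtain ⟨A, hA, rfl⟩ := Finset.mem_image.1 hS
    obtain ⟨u1, u2, u3⟩ := h1 A hA
    exact isSplit_mkS u1 u2 u3
  · intro x hx
    exact Finset.mem_image_of_mem _ (h2 x hx)

lemma isInjective_of_forall {X : Finset ℕ} {𝒮 : Finset (Finset (Finset ℕ))}
    (h : ∀ Y ∈ X.powersetCard 3, ∀ Y' ∈ X.powersetCard 3, Y ≠ Y' → ∃ S ∈ 𝒮, phiNe Y Y' S) :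
    IsInjective X 𝒮 := fun Y Y' hY hY' hcY hcY' hne =>
  h Y (Finset.mem_powersetCard.2 ⟨hY, hcY⟩) Y' (Finset.mem_powersetCard.2 ⟨hY', hcY'⟩) hne

lemma le_dimSS {𝒮 𝒯 : Finset (Finset (Finset ℕ))} (h1 : 𝒯 ⊆ 𝒮)
    (h2 : ∀ S ∈ 𝒯, ∀ T ∈ 𝒯, S ≠ T → Incompatible S T) : 𝒯.card ≤ dimSS 𝒮 := by
  classical
  apply Finset.le_sup
  simp only [Finset.mem_filter, Finset.mem_powerset]
  exact ⟨h1, h2⟩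

lemma dimSS_le {𝒮 : Finset (Finset (Finset ℕ))} {k : ℕ}
    (h : ∀ 𝒯 ⊆ 𝒮, (∀ S ∈ 𝒯, ∀ T ∈ 𝒯, S ≠ T → Incompatible S T) → 𝒯.card ≤ k) :
    dimSS 𝒮 ≤ k := by
  classical
  apply Finset.sup_le
  intro 𝒯 h𝒯
  simp only [Finset.mem_filter, Finset.mem_powerset] at h𝒯
  exact h 𝒯 h𝒯.1 h𝒯.2

lemma not_incompat_singleton {X : Finset ℕ} {S T : Finset (Finset ℕ)}
    (hS : IsSplit X S) {x : ℕ} (hx : {x} ∈ T) : ¬ Incompatible S T := by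
  rintro ⟨hne, h⟩
  obtain ⟨A, B, rfl, hu, hi, -, -⟩ := hS
  by_cases hxA : x ∈ A
  · refine h B (by simp) {x} hx ?_
    refine Finset.eq_empty_iff_forall_notMem.2 fun y hy => ?_
    rw [Finset.mem_inter, Finset.mem_singleton] at hy
    obtain ⟨hyB, rfl⟩ := hy
    have : y ∈ A ∩ B := Finset.mem_inter.2 ⟨hxA, hyB⟩
    rw [hi] at this
    exact absurd this (Finset.notMem_empty _)
  · refine h A (by simp) {x} hx ?_
    refine Finset.eq_empty_iff_forall_notMem.2 fun y hy => ?_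
    rw [Finset.mem_inter, Finset.mem_singleton] at hy
    obtain ⟨hyA, rfl⟩ := hy
    exact hxA hyA

lemma exists_four_distinct {γ : Type*} [DecidableEq γ] {𝒯 : Finset γ} (h : 4 ≤ 𝒯.card) :
    ∃ a ∈ 𝒯, ∃ b ∈ 𝒯, ∃ c ∈ 𝒯, ∃ d ∈ 𝒯,
      a ≠ b ∧ a ≠ c ∧ a ≠ d ∧ b ≠ c ∧ b ≠ d ∧ c ≠ d := by
  obtain ⟨a, ha⟩ := (Finset.card_pos (s := 𝒯)).1 (by omega)
  have h1 : 3 ≤ (𝒯.erase a).card := by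
    have := Finset.card_erase_of_mem ha; omega
  obtain ⟨b, hb⟩ := (Finset.card_pos (s := 𝒯.erase a)).1 (by omega)
  have h2 : 2 ≤ ((𝒯.erase a).erase b).card := by
    have := Finset.card_erase_of_mem hb; omega
  obtain ⟨c, hc⟩ := (Finset.card_pos (s := (𝒯.erase a).erase b)).1 (by omega)
  have h3 : 1 ≤ (((𝒯.erase a).erase b).erase c).card := by
    have := Finset.card_erase_of_mem hc; omega
  obtain ⟨d, hd⟩ := (Finset.card_pos (s := ((𝒯.erase a).erase b).erase c)).1 (by omega)
  have hbm := Finset.mem_erase.1 hb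
  have hcm := Finset.mem_erase.1 hc
  have hcm' := Finset.mem_erase.1 hcm.2
  have hdm := Finset.mem_erase.1 hd
  have hdm' := Finset.mem_erase.1 hdm.2
  have hdm'' := Finset.mem_erase.1 hdm'.2
  exact ⟨a, ha, b, hbm.2, c, hcm'.2, d, hdm''.2,
    fun e => hbm.1 e.symm, fun e => hcm'.1 e.symm, fun e => hdm''.1 e.symm,
    fun e => hcm.1 e.symm, fun e => hdm'.1 e.symm, fun e => hdm.1 e.symm⟩

lemma exists_three_distinct {γ : Type*} [DecidableEq γ] {𝒯 : Finset γ} (h : 3 ≤ 𝒯.card) :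
    ∃ a ∈ 𝒯, ∃ b ∈ 𝒯, ∃ c ∈ 𝒯, a ≠ b ∧ a ≠ c ∧ b ≠ c := by
  obtain ⟨a, ha⟩ := (Finset.card_pos (s := 𝒯)).1 (by omega)
  have h1 : 2 ≤ (𝒯.erase a).card := by
    have := Finset.card_erase_of_mem ha; omega
  obtain ⟨b, hb⟩ := (Finset.card_pos (s := 𝒯.erase a)).1 (by omega)
  have h2 : 1 ≤ ((𝒯.erase a).erase b).card := by
    have := Finset.card_erase_of_mem hb; omega
  obtain ⟨c, hc⟩ := (Finset.card_pos (s := (𝒯.erase a).erase b)).1 (by omega)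
  have hbm := Finset.mem_erase.1 hb
  have hcm := Finset.mem_erase.1 hc
  have hcm' := Finset.mem_erase.1 hcm.2
  exact ⟨a, ha, b, hbm.2, c, hcm'.2,
    fun e => hbm.1 e.symm, fun e => hcm'.1 e.symm, fun e => hcm.1 e.symm⟩

lemma no_four_pairwise {NT : Finset (Finset (Finset ℕ))}
    (h4 : ∀ a ∈ NT, ∀ b ∈ NT, Incompatible a b → ∀ c ∈ NT, Incompatible a c →
      Incompatible b c → ∀ d ∈ NT, Incompatible a d → Incompatible b d →
      Incompatible c d → False) :
    ∀ 𝒯 ⊆ NT, (∀ S ∈ 𝒯, ∀ T ∈ 𝒯, S ≠ T → Incompatible S T) → 𝒯.card ≤ 3 := by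
  intro 𝒯 hsub hpair
  by_contra hc
  push_neg at hc
  obtain ⟨a, ha, b, hb, c, hcc, d, hd, hab, hac, had, hbc, hbd, hcd⟩ :=
    exists_four_distinct hc
  exact h4 a (hsub ha) b (hsub hb) (hpair a ha b hb hab) c (hsub hcc)
    (hpair a ha c hcc hac) (hpair b hb c hcc hbc) d (hsub hd)
    (hpair a ha d hd had) (hpair b hb d hd hbd) (hpair c hcc d hd hcd)

lemma no_three_pairwise {NT : Finset (Finset (Finset ℕ))}
    (h3 : ∀ a ∈ NT, ∀ b ∈ NT, Incompatible a b → ∀ c ∈ NT, Incompatible a c →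
      Incompatible b c → False) :
    ∀ 𝒯 ⊆ NT, (∀ S ∈ 𝒯, ∀ T ∈ 𝒯, S ≠ T → Incompatible S T) → 𝒯.card ≤ 2 := by
  intro 𝒯 hsub hpair
  by_contra hc
  push_neg at hc
  obtain ⟨a, ha, b, hb, c, hcc, hab, hac, hbc⟩ := exists_three_distinct hc
  exact h3 a (hsub ha) b (hsub hb) (hpair a ha b hb hab) c (hsub hcc)
    (hpair a ha c hcc hac) (hpair b hb c hcc hbc)

/-- nontrivial part of an `mkS`-image split system -/
def NTF (n : ℕ) (F : Finset (Finset ℕ)) : Finset (Finset (Finset ℕ)) :=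
  (F.filter fun B => 2 ≤ B.card).image (mkS (Finset.Icc 1 n))

lemma dimSS_le_of_nt {n k : ℕ} {F : Finset (Finset ℕ)} (hk : 1 ≤ k)
    (h1 : ∀ A ∈ F, A ⊆ Finset.Icc 1 n ∧ A ≠ ∅ ∧ Finset.Icc 1 n \ A ≠ ∅)
    (hcl : ∀ 𝒯 ⊆ NTF n F, (∀ S ∈ 𝒯, ∀ T ∈ 𝒯, S ≠ T → Incompatible S T) → 𝒯.card ≤ k) :
    dimSS (F.image (mkS (Finset.Icc 1 n))) ≤ k := by
  apply dimSS_le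
  intro 𝒯 hsub hpair
  by_cases hc : 𝒯.card ≤ k
  · exact hc
  push_neg at hc
  have h2 : 1 < 𝒯.card := lt_of_le_of_lt hk hc
  have hsub' : 𝒯 ⊆ NTF n F := by
    intro T hT
    obtain ⟨A, hA, rfl⟩ := Finset.mem_image.1 (hsub hT)
    by_cases hcard : 2 ≤ A.card
    · exact Finset.mem_image_of_mem _ (Finset.mem_filter.2 ⟨hA, hcard⟩)
    · exfalso
      have hA1 : A.card = 1 := by
        have : A.Nonempty := Finset.nonempty_iff_ne_empty.2 (h1 A hA).2.1
        have := Finset.card_pos.2 this; omega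
      obtain ⟨x, rfl⟩ := Finset.card_eq_one.1 hA1
      obtain ⟨S, hS, hST⟩ := Finset.exists_mem_ne h2 (mkS (Finset.Icc 1 n) {x})
      have hSsplit : IsSplit (Finset.Icc 1 n) S := by
        obtain ⟨B, hB, rfl⟩ := Finset.mem_image.1 (hsub hS)
        obtain ⟨u1, u2, u3⟩ := h1 B hB
        exact isSplit_mkS u1 u2 u3
      exact not_incompat_singleton hSsplit (Finset.mem_insert_self _ _)
        (hpair S hS _ hT hST)
  exact hcl 𝒯 hsub' hpair

lemma witness_pack {n k : ℕ} {F : Finset (Finset ℕ)} (hk : 1 ≤ k)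
    (h1 : ∀ A ∈ F, A ⊆ Finset.Icc 1 n ∧ A ≠ ∅ ∧ Finset.Icc 1 n \ A ≠ ∅)
    (h2 : ∀ x ∈ Finset.Icc 1 n, {x} ∈ F)
    (h3 : ∀ Y ∈ (Finset.Icc 1 n).powersetCard 3, ∀ Y' ∈ (Finset.Icc 1 n).powersetCard 3,
      Y ≠ Y' → ∃ S ∈ F.image (mkS (Finset.Icc 1 n)), phiNe Y Y' S)
    (hcl : ∀ 𝒯 ⊆ NTF n F, (∀ S ∈ 𝒯, ∀ T ∈ 𝒯, S ≠ T → Incompatible S T) → 𝒯.card ≤ k) :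
    ∃ 𝒮 : Finset (Finset (Finset ℕ)), IsSplitSystem (Finset.Icc 1 n) 𝒮 ∧
      IsInjective (Finset.Icc 1 n) 𝒮 ∧ dimSS 𝒮 ≤ k :=
  ⟨F.image (mkS (Finset.Icc 1 n)), isSplitSystem_image h1 h2,
    isInjective_of_forall h3, dimSS_le_of_nt hk h1 hcl⟩

lemma ID_eq_of {n k : ℕ}
    (h1 : ∃ 𝒮 : Finset (Finset (Finset ℕ)), IsSplitSystem (Finset.Icc 1 n) 𝒮 ∧
      IsInjective (Finset.Icc 1 n) 𝒮 ∧ dimSS 𝒮 ≤ k)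
    (h2 : ∀ 𝒮 : Finset (Finset (Finset ℕ)), IsSplitSystem (Finset.Icc 1 n) 𝒮 →
      IsInjective (Finset.Icc 1 n) 𝒮 → k ≤ dimSS 𝒮) : ID n = k := by
  obtain ⟨𝒮, hs, hi, hd⟩ := h1
  have mem : dimSS 𝒮 ∈ {d : ℕ | ∃ 𝒮 : Finset (Finset (Finset ℕ)),
      IsSplitSystem (Finset.Icc 1 n) 𝒮 ∧ IsInjective (Finset.Icc 1 n) 𝒮 ∧ dimSS 𝒮 = d} :=
    ⟨𝒮, hs, hi, rfl⟩
  refine le_antisymm (le_trans (Nat.sInf_le mem) hd) ?_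
  exact le_csInf ⟨_, mem⟩ (by rintro d ⟨𝒮', h1', h2', rfl⟩; exact h2 𝒮' h1' h2')

lemma ID_ge_of {n k : ℕ}
    (h1 : ∃ 𝒮 : Finset (Finset (Finset ℕ)), IsSplitSystem (Finset.Icc 1 n) 𝒮 ∧
      IsInjective (Finset.Icc 1 n) 𝒮)
    (h2 : ∀ 𝒮 : Finset (Finset (Finset ℕ)), IsSplitSystem (Finset.Icc 1 n) 𝒮 →
      IsInjective (Finset.Icc 1 n) 𝒮 → k ≤ dimSS 𝒮) : k ≤ ID n := by
  obtain ⟨𝒮, hs, hi⟩ := h1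
  exact le_csInf ⟨_, ⟨𝒮, hs, hi, rfl⟩⟩ (by rintro d ⟨𝒮', h1', h2', rfl⟩; exact h2 𝒮' h1' h2')

end Statement16Aux


section QuartetMachinery

open Finset

/-- `S` has two disjoint parts, one containing `a, b`, the other containing `c, d`. -/
def Quartet (S : Finset (Finset ℕ)) (a b c d : ℕ) : Prop :=
  ∃ s ∈ S, ∃ s' ∈ S, s ∩ s' = ∅ ∧ a ∈ s ∧ b ∈ s ∧ c ∈ s' ∧ d ∈ s'

lemma quartet_swap34 {S : Finset (Finset ℕ)} {a b c d : ℕ} (h : Quartet S a b c d) :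
    Quartet S a b d c := by
  obtain ⟨s, hs, s', hs', hd, h1, h2, h3, h4⟩ := h
  exact ⟨s, hs, s', hs', hd, h1, h2, h4, h3⟩

lemma quartet_swap12 {S : Finset (Finset ℕ)} {a b c d : ℕ} (h : Quartet S a b c d) :
    Quartet S b a c d := by
  obtain ⟨s, hs, s', hs', hd, h1, h2, h3, h4⟩ := h
  exact ⟨s, hs, s', hs', hd, h2, h1, h3, h4⟩

lemma quartet_flip {S : Finset (Finset ℕ)} {a b c d : ℕ} (h : Quartet S a b c d) :
    Quartet S c d a b := by
  obtain ⟨s, hs, s', hs', hd, h1, h2, h3, h4⟩ := h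
  exact ⟨s', hs', s, hs, by rw [Finset.inter_comm]; exact hd, h3, h4, h1, h2⟩

lemma not_mem_of_inter_empty {s s' : Finset ℕ} (h : s ∩ s' = ∅) {a : ℕ} (ha : a ∈ s) :
    a ∉ s' := fun ha' => Finset.notMem_empty a (h ▸ Finset.mem_inter.2 ⟨ha, ha'⟩)

lemma split_mem_cases {X : Finset ℕ} {S : Finset (Finset ℕ)} (hS : IsSplit X S)
    {s s' P : Finset ℕ} (hs : s ∈ S) (hs' : s' ∈ S) (hne : s ≠ s') (hP : P ∈ S) :
    P = s ∨ P = s' := by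
  obtain ⟨A, B, rfl, -, -, -, -⟩ := hS
  simp only [Finset.mem_insert, Finset.mem_singleton] at hs hs' hP
  rcases hs with rfl | rfl <;> rcases hs' with rfl | rfl <;> rcases hP with rfl | rfl <;> tauto

lemma split_disjoint {X : Finset ℕ} {S : Finset (Finset ℕ)} (hS : IsSplit X S)
    {s s' : Finset ℕ} (hs : s ∈ S) (hs' : s' ∈ S) (hne : s ≠ s') : s ∩ s' = ∅ := by
  obtain ⟨A, B, rfl, -, hi, -, -⟩ := hS
  simp only [Finset.mem_insert, Finset.mem_singleton] at hs hs'
  rcases hs with rfl | rfl <;> rcases hs' with rfl | rfl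
  · exact absurd rfl hne
  · exact hi
  · rw [Finset.inter_comm]; exact hi
  · exact absurd rfl hne

lemma quartet_incomp {X : Finset ℕ} {S T : Finset (Finset ℕ)} {a b c d : ℕ}
    (hS : IsSplit X S) (hT : IsSplit X T)
    (h1 : Quartet S a c b d) (h2 : Quartet T a b c d) : Incompatible S T := by
  obtain ⟨s, hs, s', hs', hds, has, hcs, hbs', hds'⟩ := h1
  obtain ⟨t, ht, t', ht', hdt, hat, hbt, hct', hdt'⟩ := h2
  have hss' : s ≠ s' := fun he => not_mem_of_inter_empty hds has (he ▸ has)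
  have htt' : t ≠ t' := fun he => not_mem_of_inter_empty hdt hat (he ▸ hat)
  constructor
  · rintro rfl
    rcases split_mem_cases hS hs hs' hss' ht with rfl | rfl
    · exact not_mem_of_inter_empty hdt hcs hct'
    · exact not_mem_of_inter_empty hds has hat
  · intro P hP Q hQ
    have hnonempty : ∀ z : ℕ, z ∈ P → z ∈ Q → P ∩ Q ≠ ∅ := fun z h1 h2 he =>
      Finset.notMem_empty z (he ▸ Finset.mem_inter.2 ⟨h1, h2⟩)
    rcases split_mem_cases hS hs hs' hss' hP with rfl | rfl <;>
      rcases split_mem_cases hT ht ht' htt' hQ with rfl | rfl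
    · exact hnonempty a has hat
    · exact hnonempty c hcs hct'
    · exact hnonempty b hbs' hbt
    · exact hnonempty d hds' hdt'

lemma two_mem_of_card {Y t : Finset ℕ} {p q r : ℕ} (hY : Y = {p, q, r})
    (h2 : 2 ≤ (Y ∩ t).card) :
    (p ∈ t ∧ q ∈ t) ∨ (p ∈ t ∧ r ∈ t) ∨ (q ∈ t ∧ r ∈ t) := by
  by_cases hp : p ∈ t <;> by_cases hq : q ∈ t <;> by_cases hr : r ∈ t
  · exact Or.inl ⟨hp, hq⟩
  · exact Or.inl ⟨hp, hq⟩
  · exact Or.inr (Or.inl ⟨hp, hr⟩)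
  · exfalso
    have hsub : Y ∩ t ⊆ {p} := by
      intro z hz
      obtain ⟨hzY, hzt⟩ := Finset.mem_inter.1 hz
      rw [hY] at hzY
      rcases Finset.mem_insert.1 hzY with rfl | hzY
      · exact Finset.mem_singleton_self z
      rcases Finset.mem_insert.1 hzY with rfl | hzY
      · exact absurd hzt hq
      · rw [Finset.mem_singleton] at hzY; subst hzY; exact absurd hzt hr
    have := Finset.card_le_card hsub
    rw [Finset.card_singleton] at this; omega
  · exact Or.inr (Or.inr ⟨hq, hr⟩)
  · exfalso
    have hsub : Y ∩ t ⊆ {q} := by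
      intro z hz
      obtain ⟨hzY, hzt⟩ := Finset.mem_inter.1 hz
      rw [hY] at hzY
      rcases Finset.mem_insert.1 hzY with rfl | hzY
      · exact absurd hzt hp
      rcases Finset.mem_insert.1 hzY with rfl | hzY
      · exact Finset.mem_singleton_self z
      · rw [Finset.mem_singleton] at hzY; subst hzY; exact absurd hzt hr
    have := Finset.card_le_card hsub
    rw [Finset.card_singleton] at this; omega
  · exfalso
    have hsub : Y ∩ t ⊆ {r} := by
      intro z hz
      obtain ⟨hzY, hzt⟩ := Finset.mem_inter.1 hz
      rw [hY] at hzY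
      rcases Finset.mem_insert.1 hzY with rfl | hzY
      · exact absurd hzt hp
      rcases Finset.mem_insert.1 hzY with rfl | hzY
      · exact absurd hzt hq
      · rw [Finset.mem_singleton] at hzY; subst hzY; exact Finset.mem_singleton_self z
    have := Finset.card_le_card hsub
    rw [Finset.card_singleton] at this; omega
  · exfalso
    have hsub : Y ∩ t ⊆ ∅ := by
      intro z hz
      obtain ⟨hzY, hzt⟩ := Finset.mem_inter.1 hz
      rw [hY] at hzY
      rcases Finset.mem_insert.1 hzY with rfl | hzY
      · exact absurd hzt hp
      rcases Finset.mem_insert.1 hzY with rfl | hzY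
      · exact absurd hzt hq
      · rw [Finset.mem_singleton] at hzY; subst hzY; exact absurd hzt hr
    have := Finset.card_le_card hsub
    rw [Finset.card_empty] at this; omega

lemma card_three {p q r : ℕ} (hpq : p ≠ q) (hpr : p ≠ r) (hqr : q ≠ r) :
    ({p, q, r} : Finset ℕ).card = 3 := by
  rw [Finset.card_insert_of_notMem (by simp [hpq, hpr]),
    Finset.card_insert_of_notMem (by simp [hqr]), Finset.card_singleton]

lemma U1 {X : Finset ℕ} {𝒮 : Finset (Finset (Finset ℕ))}
    (hSS : IsSplitSystem X 𝒮) (hInj : IsInjective X 𝒮)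
    {x y u v : ℕ} (hx : x ∈ X) (hy : y ∈ X) (hu : u ∈ X) (hv : v ∈ X)
    (hxy : x ≠ y) (hxu : x ≠ u) (hxv : x ≠ v) (hyu : y ≠ u) (hyv : y ≠ v) (huv : u ≠ v) :
    ∃ S ∈ 𝒮, IsSplit X S ∧ (Quartet S x u y v ∨ Quartet S x v y u) := by
  have hYX : ({u, v, x} : Finset ℕ) ⊆ X := by
    intro z hz
    rcases Finset.mem_insert.1 hz with rfl | hz
    · exact hu
    rcases Finset.mem_insert.1 hz with rfl | hz
    · exact hv
    · rw [Finset.mem_singleton] at hz; subst hz; exact hx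
  have hY'X : ({u, v, y} : Finset ℕ) ⊆ X := by
    intro z hz
    rcases Finset.mem_insert.1 hz with rfl | hz
    · exact hu
    rcases Finset.mem_insert.1 hz with rfl | hz
    · exact hv
    · rw [Finset.mem_singleton] at hz; subst hz; exact hy
  have hcY : ({u, v, x} : Finset ℕ).card = 3 := card_three huv (Ne.symm hxu) (Ne.symm hxv)
  have hcY' : ({u, v, y} : Finset ℕ).card = 3 := card_three huv (Ne.symm hyu) (Ne.symm hyv)
  have hne : ({u, v, x} : Finset ℕ) ≠ ({u, v, y} : Finset ℕ) := by
    intro he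
    have : x ∈ ({u, v, y} : Finset ℕ) := he ▸ (by simp : x ∈ ({u, v, x} : Finset ℕ))
    simp only [Finset.mem_insert, Finset.mem_singleton] at this
    rcases this with h | h | h
    · exact hxu h
    · exact hxv h
    · exact hxy h
  obtain ⟨S, hS𝒮, t, ht, t', ht', htt', c1, c2⟩ := hInj _ _ hYX hY'X hcY hcY' hne
  have hsplit := hSS.1 S hS𝒮
  have hdisj := split_disjoint hsplit ht ht' htt'
  refine ⟨S, hS𝒮, hsplit, ?_⟩
  rcases two_mem_of_card rfl c1 with ⟨hu1, hv1⟩ | ⟨hu1, hx1⟩ | ⟨hv1, hx1⟩ <;>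
    rcases two_mem_of_card rfl c2 with ⟨hu2, hv2⟩ | ⟨hu2, hy2⟩ | ⟨hv2, hy2⟩
  · exact absurd hu2 (not_mem_of_inter_empty hdisj hu1)
  · exact absurd hu2 (not_mem_of_inter_empty hdisj hu1)
  · exact absurd hv2 (not_mem_of_inter_empty hdisj hv1)
  · exact absurd hu2 (not_mem_of_inter_empty hdisj hu1)
  · exact absurd hu2 (not_mem_of_inter_empty hdisj hu1)
  · exact Or.inl ⟨t, ht, t', ht', hdisj, hx1, hu1, hy2, hv2⟩
  · exact absurd hv2 (not_mem_of_inter_empty hdisj hv1)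
  · exact Or.inr ⟨t, ht, t', ht', hdisj, hx1, hv1, hy2, hu2⟩
  · exact absurd hv2 (not_mem_of_inter_empty hdisj hv1)

lemma incomp_symm {S T : Finset (Finset ℕ)} (h : Incompatible S T) : Incompatible T S :=
  ⟨h.1.symm, fun A hA B hB => by rw [Finset.inter_comm]; exact h.2 B hB A hA⟩

lemma two_incomp_dim {𝒮 : Finset (Finset (Finset ℕ))} {S T : Finset (Finset ℕ)}
    (hS : S ∈ 𝒮) (hT : T ∈ 𝒮) (h : Incompatible S T) : 2 ≤ dimSS 𝒮 := by
  have hne : S ≠ T := h.1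
  have hcard : ({S, T} : Finset (Finset (Finset ℕ))).card = 2 := by
    rw [Finset.card_insert_of_notMem (by simp [hne]), Finset.card_singleton]
  calc (2 : ℕ) = ({S, T} : Finset (Finset (Finset ℕ))).card := hcard.symm
    _ ≤ dimSS 𝒮 := by
      apply le_dimSS
      · intro P hP
        rcases Finset.mem_insert.1 hP with rfl | hP
        · exact hS
        · rw [Finset.mem_singleton] at hP; subst hP; exact hT
      · intro P hP Q hQ hPQ
        simp only [Finset.mem_insert, Finset.mem_singleton] at hP hQ
        rcases hP with rfl | rfl <;> rcases hQ with rfl | rfl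
        · exact absurd rfl hPQ
        · exact h
        · exact incomp_symm h
        · exact absurd rfl hPQ

lemma three_incomp_dim {𝒮 : Finset (Finset (Finset ℕ))} {S T U : Finset (Finset ℕ)}
    (hS : S ∈ 𝒮) (hT : T ∈ 𝒮) (hU : U ∈ 𝒮)
    (hST : Incompatible S T) (hSU : Incompatible S U) (hTU : Incompatible T U) :
    3 ≤ dimSS 𝒮 := by
  have h1 : S ≠ T := hST.1
  have h2 : S ≠ U := hSU.1
  have h3 : T ≠ U := hTU.1
  have hcard : ({S, T, U} : Finset (Finset (Finset ℕ))).card = 3 := by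
    rw [Finset.card_insert_of_notMem (by simp [h1, h2]),
      Finset.card_insert_of_notMem (by simp [h3]), Finset.card_singleton]
  calc (3 : ℕ) = ({S, T, U} : Finset (Finset (Finset ℕ))).card := hcard.symm
    _ ≤ dimSS 𝒮 := by
      apply le_dimSS
      · intro P hP
        rcases Finset.mem_insert.1 hP with rfl | hP
        · exact hS
        rcases Finset.mem_insert.1 hP with rfl | hP
        · exact hT
        · rw [Finset.mem_singleton] at hP; subst hP; exact hU
      · intro P hP Q hQ hPQ
        simp only [Finset.mem_insert, Finset.mem_singleton] at hP hQ
        rcases hP with rfl | rfl | rfl <;> rcases hQ with rfl | rfl | rfl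
        · exact absurd rfl hPQ
        · exact hST
        · exact hSU
        · exact incomp_symm hST
        · exact absurd rfl hPQ
        · exact hTU
        · exact incomp_symm hSU
        · exact incomp_symm hTU
        · exact absurd rfl hPQ

end QuartetMachinery


section TraceMachinery

open Finset

/-- The concrete six-element set `{1,…,6}`. -/
def Y6 : Finset ℕ := Finset.Icc 1 6

lemma card_Y6 : Y6.card = 6 := by decide

/-- The split `S` traces on `Y6` as the bipartition `e | Y6 \ e`. -/
def TraceIs (S : Finset (Finset ℕ)) (e : Finset ℕ) : Prop :=
  ∃ s ∈ S, ∃ s' ∈ S, s ∩ s' = ∅ ∧ s ∩ Y6 = e ∧ s' ∩ Y6 = Y6 \ e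

lemma split_union {X : Finset ℕ} {S : Finset (Finset ℕ)} (hS : IsSplit X S)
    {s s' : Finset ℕ} (hs : s ∈ S) (hs' : s' ∈ S) (hne : s ≠ s') : s ∪ s' = X := by
  obtain ⟨A, B, rfl, hu, -, -, -⟩ := hS
  simp only [Finset.mem_insert, Finset.mem_singleton] at hs hs'
  rcases hs with rfl | rfl <;> rcases hs' with rfl | rfl
  · exact absurd rfl hne
  · exact hu
  · rw [Finset.union_comm]; exact hu
  · exact absurd rfl hne

lemma trace_of_parts {X : Finset ℕ} {S : Finset (Finset ℕ)} (hS : IsSplit X S)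
    (hYX : Y6 ⊆ X) {s s' : Finset ℕ} (hs : s ∈ S) (hs' : s' ∈ S) (hd : s ∩ s' = ∅)
    {a : ℕ} (ha : a ∈ s) : TraceIs S (s ∩ Y6) := by
  have hne : s ≠ s' := fun he => not_mem_of_inter_empty hd ha (he ▸ ha)
  refine ⟨s, hs, s', hs', hd, rfl, ?_⟩
  have hu := split_union hS hs hs' hne
  ext z
  simp only [Finset.mem_inter, Finset.mem_sdiff]
  constructor
  · rintro ⟨hzs', hzY⟩
    exact ⟨hzY, fun h => not_mem_of_inter_empty hd h.1 hzs'⟩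
  · rintro ⟨hzY, hz⟩
    have hzX : z ∈ X := hYX hzY
    rw [← hu, Finset.mem_union] at hzX
    rcases hzX with h | h
    · exact absurd ⟨h, hzY⟩ hz
    · exact ⟨h, hzY⟩

lemma trace_compl {S : Finset (Finset ℕ)} {e : Finset ℕ} (he : e ⊆ Y6)
    (h : TraceIs S e) : TraceIs S (Y6 \ e) := by
  obtain ⟨s, hs, s', hs', hd, h1, h2⟩ := h
  exact ⟨s', hs', s, hs, by rw [Finset.inter_comm]; exact hd, h2,
    by rw [h1, Finset.sdiff_sdiff_eq_self he]⟩

lemma trace_incomp {X : Finset ℕ} {S T : Finset (Finset ℕ)} {e f : Finset ℕ}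
    (hS : IsSplit X S) (hT : IsSplit X T)
    (he : TraceIs S e) (hf : TraceIs T f)
    {p1 p2 p3 p4 : ℕ}
    (hp1 : p1 ∈ e ∧ p1 ∈ f) (hp2 : p2 ∈ e ∧ p2 ∈ Y6 ∧ p2 ∉ f)
    (hp3 : p3 ∈ f ∧ p3 ∈ Y6 ∧ p3 ∉ e) (hp4 : p4 ∈ Y6 ∧ p4 ∉ e ∧ p4 ∉ f) :
    Incompatible S T := by
  obtain ⟨s, hs, s', hs', hd, hse, hse'⟩ := he
  obtain ⟨t, ht, t', ht', hd', htf, htf'⟩ := hf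
  have hp1e : p1 ∈ e := hp1.1
  have hss' : s ≠ s' := by
    intro hEq
    have : p1 ∈ s := by rw [← hse] at hp1e; exact (Finset.mem_inter.1 hp1e).1
    exact not_mem_of_inter_empty hd this (hEq ▸ this)
  have htt' : t ≠ t' := by
    intro hEq
    have : p1 ∈ t := by
      have := hp1.2; rw [← htf] at this; exact (Finset.mem_inter.1 this).1
    exact not_mem_of_inter_empty hd' this (hEq ▸ this)
  -- memberships of the four points in the four parts
  have hp1s : p1 ∈ s := by have := hp1.1; rw [← hse] at this; exact (Finset.mem_inter.1 this).1
  have hp1t : p1 ∈ t := by have := hp1.2; rw [← htf] at this; exact (Finset.mem_inter.1 this).1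
  have hp2s : p2 ∈ s := by have := hp2.1; rw [← hse] at this; exact (Finset.mem_inter.1 this).1
  have hp2t' : p2 ∈ t' := by
    have : p2 ∈ Y6 \ f := Finset.mem_sdiff.2 ⟨hp2.2.1, hp2.2.2⟩
    rw [← htf'] at this; exact (Finset.mem_inter.1 this).1
  have hp3t : p3 ∈ t := by have := hp3.1; rw [← htf] at this; exact (Finset.mem_inter.1 this).1
  have hp3s' : p3 ∈ s' := by
    have : p3 ∈ Y6 \ e := Finset.mem_sdiff.2 ⟨hp3.2.1, hp3.2.2⟩
    rw [← hse'] at this; exact (Finset.mem_inter.1 this).1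
  have hp4s' : p4 ∈ s' := by
    have : p4 ∈ Y6 \ e := Finset.mem_sdiff.2 ⟨hp4.1, hp4.2.1⟩
    rw [← hse'] at this; exact (Finset.mem_inter.1 this).1
  have hp4t' : p4 ∈ t' := by
    have : p4 ∈ Y6 \ f := Finset.mem_sdiff.2 ⟨hp4.1, hp4.2.2⟩
    rw [← htf'] at this; exact (Finset.mem_inter.1 this).1
  constructor
  · rintro rfl
    rcases split_mem_cases hS hs hs' hss' ht with rfl | rfl
    · -- t = s : f = e, but p3 ∈ f \ e
      have : p3 ∈ e := by rw [← hse]; exact Finset.mem_inter.2 ⟨hp3t, hp3.2.1⟩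
      exact hp3.2.2 this
    · -- t = s' : p1 ∈ s ∩ s'
      exact not_mem_of_inter_empty hd hp1s hp1t
  · intro P hP Q hQ
    have hnonempty : ∀ z : ℕ, z ∈ P → z ∈ Q → P ∩ Q ≠ ∅ := fun z h1 h2 hemp =>
      Finset.notMem_empty z (hemp ▸ Finset.mem_inter.2 ⟨h1, h2⟩)
    rcases split_mem_cases hS hs hs' hss' hP with rfl | rfl <;>
      rcases split_mem_cases hT ht ht' htt' hQ with rfl | rfl
    · exact hnonempty p1 hp1s hp1t
    · exact hnonempty p2 hp2s hp2t'
    · exact hnonempty p3 hp3s' hp3t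
    · exact hnonempty p4 hp4s' hp4t'

/-- Main workhorse: a separating trace for a 4-subset of `Y6`. -/
lemma QT {n : ℕ} {𝒮 : Finset (Finset (Finset ℕ))} (hn : 6 ≤ n)
    (hSS : IsSplitSystem (Finset.Icc 1 n) 𝒮) (hInj : IsInjective (Finset.Icc 1 n) 𝒮)
    {x y u v : ℕ} (hx : x ∈ Y6) (hy : y ∈ Y6) (hu : u ∈ Y6) (hv : v ∈ Y6)
    (hxy : x ≠ y) (hxu : x ≠ u) (hxv : x ≠ v) (hyu : y ≠ u) (hyv : y ≠ v) (huv : u ≠ v) :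
    ∃ S ∈ 𝒮, IsSplit (Finset.Icc 1 n) S ∧ ∃ e ⊆ Y6, TraceIs S e ∧
      x ∈ e ∧ y ∉ e ∧ ((u ∈ e ∧ v ∉ e) ∨ (v ∈ e ∧ u ∉ e)) := by
  have hYX : Y6 ⊆ Finset.Icc 1 n := Finset.Icc_subset_Icc_right hn
  obtain ⟨S, hS𝒮, hsp, hq⟩ := U1 hSS hInj (hYX hx) (hYX hy) (hYX hu) (hYX hv)
    hxy hxu hxv hyu hyv huv
  refine ⟨S, hS𝒮, hsp, ?_⟩
  rcases hq with ⟨s, hs, s', hs', hd, hxs, hus, hys', hvs'⟩ |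
    ⟨s, hs, s', hs', hd, hxs, hvs, hys', hus'⟩
  · refine ⟨s ∩ Y6, Finset.inter_subset_right, trace_of_parts hsp hYX hs hs' hd hxs, ?_, ?_, ?_⟩
    · exact Finset.mem_inter.2 ⟨hxs, hx⟩
    · intro hmem
      exact not_mem_of_inter_empty hd (Finset.mem_inter.1 hmem).1 hys'
    · exact Or.inl ⟨Finset.mem_inter.2 ⟨hus, hu⟩,
        fun hmem => not_mem_of_inter_empty hd (Finset.mem_inter.1 hmem).1 hvs'⟩
  · refine ⟨s ∩ Y6, Finset.inter_subset_right, trace_of_parts hsp hYX hs hs' hd hxs, ?_, ?_, ?_⟩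
    · exact Finset.mem_inter.2 ⟨hxs, hx⟩
    · intro hmem
      exact not_mem_of_inter_empty hd (Finset.mem_inter.1 hmem).1 hys'
    · exact Or.inr ⟨Finset.mem_inter.2 ⟨hvs, hv⟩,
        fun hmem => not_mem_of_inter_empty hd (Finset.mem_inter.1 hmem).1 hus'⟩

lemma pair_eq_of_mem {g : Finset ℕ} {a b : ℕ} (hc : g.card = 2) (ha : a ∈ g) (hb : b ∈ g)
    (hab : a ≠ b) : g = {a, b} := by
  have hsub : ({a, b} : Finset ℕ) ⊆ g := by
    intro z hz
    rcases Finset.mem_insert.1 hz with rfl | hz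
    · exact ha
    · rw [Finset.mem_singleton] at hz; subst hz; exact hb
  have hcab : ({a, b} : Finset ℕ).card = 2 := by
    rw [Finset.card_insert_of_notMem (by simp [hab]), Finset.card_singleton]
  exact (Finset.eq_of_subset_of_card_le hsub (by omega)).symm

/-- Refined workhorse: under control of 3–3 traces, we get a 2-element trace. -/
lemma QT2 {n : ℕ} {𝒮 : Finset (Finset (Finset ℕ))} (hn : 6 ≤ n)
    (hSS : IsSplitSystem (Finset.Icc 1 n) 𝒮) (hInj : IsInjective (Finset.Icc 1 n) 𝒮)
    {x y u v : ℕ} (hx : x ∈ Y6) (hy : y ∈ Y6) (hu : u ∈ Y6) (hv : v ∈ Y6)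
    (hxy : x ≠ y) (hxu : x ≠ u) (hxv : x ≠ v) (hyu : y ≠ u) (hyv : y ≠ v) (huv : u ≠ v)
    (h3 : ∀ S ∈ 𝒮, ∀ e, e ⊆ Y6 → e.card = 3 → TraceIs S e → ¬(x ∈ e ∧ y ∉ e)) :
    ∃ S ∈ 𝒮, ∃ g, g ⊆ Y6 ∧ g.card = 2 ∧ TraceIs S g ∧
      ((x ∈ g ∧ y ∉ g) ∨ (y ∈ g ∧ x ∉ g)) ∧ ((u ∈ g ∧ v ∉ g) ∨ (v ∈ g ∧ u ∉ g)) := by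
  obtain ⟨S, hS𝒮, hsp, e, he6, htr, hxe, hye, hw⟩ := QT hn hSS hInj hx hy hu hv
    hxy hxu hxv hyu hyv huv
  have hclo : 2 ≤ e.card := by
    rcases hw with ⟨hue, -⟩ | ⟨hve, -⟩
    · have : ({x, u} : Finset ℕ) ⊆ e := by
        intro z hz
        rcases Finset.mem_insert.1 hz with rfl | hz
        · exact hxe
        · rw [Finset.mem_singleton] at hz; subst hz; exact hue
      have := Finset.card_le_card this
      rw [Finset.card_insert_of_notMem (by simp [hxu]), Finset.card_singleton] at this
      omega
    · have : ({x, v} : Finset ℕ) ⊆ e := by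
        intro z hz
        rcases Finset.mem_insert.1 hz with rfl | hz
        · exact hxe
        · rw [Finset.mem_singleton] at hz; subst hz; exact hve
      have := Finset.card_le_card this
      rw [Finset.card_insert_of_notMem (by simp [hxv]), Finset.card_singleton] at this
      omega
  have hchi : e.card ≤ 4 := by
    have hsub : e ⊆ (Y6.erase y).erase (if u ∈ e then v else u) := by
      intro z hz
      rcases hw with ⟨hue, hve⟩ | ⟨hve, hue⟩
      · rw [if_pos hue]
        refine Finset.mem_erase.2 ⟨fun h => hve (h ▸ hz), Finset.mem_erase.2
          ⟨fun h => hye (h ▸ hz), he6 hz⟩⟩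
      · rw [if_neg hue]
        refine Finset.mem_erase.2 ⟨fun h => hue (h ▸ hz), Finset.mem_erase.2
          ⟨fun h => hye (h ▸ hz), he6 hz⟩⟩
    have h1 := Finset.card_le_card hsub
    have h2 := Finset.card_erase_le (s := Y6.erase y) (a := if u ∈ e then v else u)
    have h3' := Finset.card_erase_le (s := Y6) (a := y)
    have hy1 : y ∈ Y6 := hy
    have : (Y6.erase y).card = 5 := by rw [Finset.card_erase_of_mem hy1, card_Y6]
    have huv' : (if u ∈ e then v else u) ∈ Y6.erase y := by
      split
      · exact Finset.mem_erase.2 ⟨Ne.symm hyv, hv⟩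
      · exact Finset.mem_erase.2 ⟨Ne.symm hyu, hu⟩
    rw [Finset.card_erase_of_mem huv', this] at h1
    omega
  rcases Nat.lt_or_ge e.card 3 with hlt | hge
  · -- card 2
    have hc2 : e.card = 2 := by omega
    exact ⟨S, hS𝒮, e, he6, hc2, htr, Or.inl ⟨hxe, hye⟩, hw⟩
  rcases Nat.eq_or_lt_of_le hge with hc3 | hgt
  · exact absurd ⟨hxe, hye⟩ (h3 S hS𝒮 e he6 hc3.symm htr)
  · -- card 4, take complement
    have hc4 : e.card = 4 := by omega
    refine ⟨S, hS𝒮, Y6 \ e, Finset.sdiff_subset, ?_, trace_compl he6 htr, ?_, ?_⟩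
    · rw [Finset.card_sdiff_of_subset he6, card_Y6, hc4]
    · exact Or.inr ⟨Finset.mem_sdiff.2 ⟨hy, hye⟩, fun h => (Finset.mem_sdiff.1 h).2 hxe⟩
    · rcases hw with ⟨hue, hve⟩ | ⟨hve, hue⟩
      · exact Or.inr ⟨Finset.mem_sdiff.2 ⟨hv, hve⟩, fun h => (Finset.mem_sdiff.1 h).2 hue⟩
      · exact Or.inl ⟨Finset.mem_sdiff.2 ⟨hu, hue⟩, fun h => (Finset.mem_sdiff.1 h).2 hve⟩

lemma two_sdiff_nonempty {e f : Finset ℕ} (he : e.card = 2) (hf : f.card = 2)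
    (hne : e ≠ f) : ∃ z, z ∈ e ∧ z ∉ f := by
  by_contra hcon
  push_neg at hcon
  exact hne (Finset.eq_of_subset_of_card_le (fun z hz => hcon z hz) (by omega))

lemma exists_outside {e f : Finset ℕ} (he : e ⊆ Y6) (hf : f ⊆ Y6)
    (hce : e.card ≤ 3) (hcf : f.card = 2) : ∃ p4, p4 ∈ Y6 ∧ p4 ∉ e ∧ p4 ∉ f := by
  have hsub : e ∪ f ⊆ Y6 := Finset.union_subset he hf
  have hcu : (e ∪ f).card ≤ 5 := le_trans (Finset.card_union_le e f) (by omega)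
  have : 0 < (Y6 \ (e ∪ f)).card := by
    rw [Finset.card_sdiff_of_subset hsub, card_Y6]; omega
  obtain ⟨p4, hp4⟩ := Finset.card_pos.1 this
  obtain ⟨h1, h2⟩ := Finset.mem_sdiff.1 hp4
  rw [Finset.mem_union] at h2
  push_neg at h2
  exact ⟨p4, h1, h2.1, h2.2⟩

/-- Three pairwise intersecting, pairwise distinct realized 2-traces are impossible
when there are no three pairwise incompatible splits. -/
lemma three_edges {n : ℕ} {𝒮 : Finset (Finset (Finset ℕ))}
    (hSS : IsSplitSystem (Finset.Icc 1 n) 𝒮)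
    (hno : ∀ S1 ∈ 𝒮, ∀ S2 ∈ 𝒮, ∀ S3 ∈ 𝒮,
      ¬(Incompatible S1 S2 ∧ Incompatible S1 S3 ∧ Incompatible S2 S3))
    {e f g : Finset ℕ} (he6 : e ⊆ Y6) (hf6 : f ⊆ Y6) (hg6 : g ⊆ Y6)
    (hce : e.card = 2) (hcf : f.card = 2) (hcg : g.card = 2)
    (hef : e ≠ f) (heg : e ≠ g) (hfg : f ≠ g)
    (hef' : ∃ z, z ∈ e ∧ z ∈ f) (heg' : ∃ z, z ∈ e ∧ z ∈ g) (hfg' : ∃ z, z ∈ f ∧ z ∈ g)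
    (hre : ∃ S ∈ 𝒮, TraceIs S e) (hrf : ∃ S ∈ 𝒮, TraceIs S f)
    (hrg : ∃ S ∈ 𝒮, TraceIs S g) : False := by
  obtain ⟨Se, hSe, hte⟩ := hre
  obtain ⟨Sf, hSf, htf⟩ := hrf
  obtain ⟨Sg, hSg, htg⟩ := hrg
  have hspe := hSS.1 Se hSe
  have hspf := hSS.1 Sf hSf
  have hspg := hSS.1 Sg hSg
  have key : ∀ (S T : Finset (Finset ℕ)), IsSplit (Finset.Icc 1 n) S →
      IsSplit (Finset.Icc 1 n) T → ∀ (a b : Finset ℕ), a ⊆ Y6 → b ⊆ Y6 →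
      a.card = 2 → b.card = 2 → a ≠ b → (∃ z, z ∈ a ∧ z ∈ b) →
      TraceIs S a → TraceIs T b → Incompatible S T := by
    intro S T hS hT a b ha6 hb6 hca hcb hab hab' hta htb
    obtain ⟨p1, hp1⟩ := hab'
    obtain ⟨p2, hp2a, hp2b⟩ := two_sdiff_nonempty hca hcb hab
    obtain ⟨p3, hp3b, hp3a⟩ := two_sdiff_nonempty hcb hca (Ne.symm hab)
    obtain ⟨p4, hp4⟩ := exists_outside ha6 hb6 (by omega) hcb
    exact trace_incomp hS hT hta htb hp1 ⟨hp2a, ha6 hp2a, hp2b⟩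
      ⟨hp3b, hb6 hp3b, hp3a⟩ hp4
  exact hno Se hSe Sf hSf Sg hSg
    ⟨key Se Sf hspe hspf e f he6 hf6 hce hcf hef hef' hte htf,
     key Se Sg hspe hspg e g he6 hg6 hce hcg heg heg' hte htg,
     key Sf Sg hspf hspg f g hf6 hg6 hcf hcg hfg hfg' htf htg⟩

end TraceMachinery


section DimThree

open Finset

variable {n : ℕ} {𝒮 : Finset (Finset (Finset ℕ))}

lemma case_III_core (hn : 6 ≤ n)
    (hSS : IsSplitSystem (Finset.Icc 1 n) 𝒮) (hInj : IsInjective (Finset.Icc 1 n) 𝒮)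
    (hno : ∀ S1 ∈ 𝒮, ∀ S2 ∈ 𝒮, ∀ S3 ∈ 𝒮,
      ¬(Incompatible S1 S2 ∧ Incompatible S1 S3 ∧ Incompatible S2 S3))
    {P R : Finset ℕ} (hP6 : P ⊆ Y6) (hPc : P.card = 3)
    (hR6 : R ⊆ Y6) (hRc : R.card = 3) (hk : (P ∩ R).card = 2)
    (hreP : ∃ V ∈ 𝒮, TraceIs V P) (hreR : ∃ W ∈ 𝒮, TraceIs W R) : False := by
  obtain ⟨V, hV, htrP⟩ := hreP
  obtain ⟨W, hW, htrR⟩ := hreR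
  have hspV := hSS.1 V hV
  have hspW := hSS.1 W hW
  obtain ⟨x, y, hxy, hxyeq⟩ := Finset.card_eq_two.1 hk
  have hxPR : x ∈ P ∩ R := hxyeq ▸ Finset.mem_insert_self _ _
  have hyPR : y ∈ P ∩ R := hxyeq ▸ Finset.mem_insert_of_mem (Finset.mem_singleton_self _)
  have hxP := (Finset.mem_inter.1 hxPR).1
  have hxR := (Finset.mem_inter.1 hxPR).2
  have hyP := (Finset.mem_inter.1 hyPR).1
  have hyR := (Finset.mem_inter.1 hyPR).2
  have hPR6 : P ∪ R ⊆ Y6 := Finset.union_subset hP6 hR6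
  have hcPR : (P ∪ R).card = 4 := by
    have := Finset.card_union_add_card_inter P R
    omega
  have hout : (Y6 \ (P ∪ R)).card = 2 := by
    rw [Finset.card_sdiff_of_subset hPR6, card_Y6, hcPR]
  obtain ⟨u, v, huv, huveq⟩ := Finset.card_eq_two.1 hout
  have huo : u ∈ Y6 \ (P ∪ R) := huveq ▸ Finset.mem_insert_self _ _
  have hvo : v ∈ Y6 \ (P ∪ R) := huveq ▸ Finset.mem_insert_of_mem (Finset.mem_singleton_self _)
  have hu6 := (Finset.mem_sdiff.1 huo).1
  have hv6 := (Finset.mem_sdiff.1 hvo).1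
  have huP : u ∉ P := fun h => (Finset.mem_sdiff.1 huo).2 (Finset.mem_union_left _ h)
  have huR : u ∉ R := fun h => (Finset.mem_sdiff.1 huo).2 (Finset.mem_union_right _ h)
  have hvP : v ∉ P := fun h => (Finset.mem_sdiff.1 hvo).2 (Finset.mem_union_left _ h)
  have hvR : v ∉ R := fun h => (Finset.mem_sdiff.1 hvo).2 (Finset.mem_union_right _ h)
  obtain ⟨S, hS, hspS, e, he6, htrS, hxe, hye, hw⟩ := QT hn hSS hInj
    (hP6 hxP) (hP6 hyP) hu6 hv6 hxy
    (fun h => huP (h ▸ hxP)) (fun h => hvP (h ▸ hxP))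
    (fun h => huP (h ▸ hyP)) (fun h => hvP (h ▸ hyP)) huv
  -- S is incompatible with both V and W
  have hSV : Incompatible S V := by
    rcases hw with ⟨hue, hve⟩ | ⟨hve, hue⟩
    · exact trace_incomp hspS hspV htrS htrP ⟨hxe, hxP⟩ ⟨hue, hu6, huP⟩
        ⟨hyP, hP6 hyP, hye⟩ ⟨hv6, hve, hvP⟩
    · exact trace_incomp hspS hspV htrS htrP ⟨hxe, hxP⟩ ⟨hve, hv6, hvP⟩
        ⟨hyP, hP6 hyP, hye⟩ ⟨hu6, hue, huP⟩
  have hSW : Incompatible S W := by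
    rcases hw with ⟨hue, hve⟩ | ⟨hve, hue⟩
    · exact trace_incomp hspS hspW htrS htrR ⟨hxe, hxR⟩ ⟨hue, hu6, huR⟩
        ⟨hyR, hR6 hyR, hye⟩ ⟨hv6, hve, hvR⟩
    · exact trace_incomp hspS hspW htrS htrR ⟨hxe, hxR⟩ ⟨hve, hv6, hvR⟩
        ⟨hyR, hR6 hyR, hye⟩ ⟨hu6, hue, huR⟩
  have hVW : Incompatible V W := by
    have hPdR : 0 < (P \ R).card := by
      have := Finset.card_sdiff_add_card_inter P R
      omega
    obtain ⟨p2, hp2⟩ := Finset.card_pos.1 hPdR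
    have hRdP : 0 < (R \ P).card := by
      have := Finset.card_sdiff_add_card_inter R P
      rw [Finset.inter_comm] at this
      omega
    obtain ⟨p3, hp3⟩ := Finset.card_pos.1 hRdP
    exact trace_incomp hspV hspW htrP htrR ⟨hxP, hxR⟩
      ⟨(Finset.mem_sdiff.1 hp2).1, hP6 (Finset.mem_sdiff.1 hp2).1, (Finset.mem_sdiff.1 hp2).2⟩
      ⟨(Finset.mem_sdiff.1 hp3).1, hR6 (Finset.mem_sdiff.1 hp3).1, (Finset.mem_sdiff.1 hp3).2⟩
      ⟨hu6, huP, huR⟩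
  exact hno S hS V hV W hW ⟨hSV, hSW, hVW⟩

lemma case_III (hn : 6 ≤ n)
    (hSS : IsSplitSystem (Finset.Icc 1 n) 𝒮) (hInj : IsInjective (Finset.Icc 1 n) 𝒮)
    (hno : ∀ S1 ∈ 𝒮, ∀ S2 ∈ 𝒮, ∀ S3 ∈ 𝒮,
      ¬(Incompatible S1 S2 ∧ Incompatible S1 S3 ∧ Incompatible S2 S3))
    {P R : Finset ℕ} (hP6 : P ⊆ Y6) (hPc : P.card = 3)
    (hR6 : R ⊆ Y6) (hRc : R.card = 3) (hRP : R ≠ P) (hRP' : R ≠ Y6 \ P)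
    (hreP : ∃ V ∈ 𝒮, TraceIs V P) (hreR : ∃ W ∈ 𝒮, TraceIs W R) : False := by
  have hkle : (P ∩ R).card ≤ 3 := le_trans (Finset.card_le_card Finset.inter_subset_left) hPc.le
  have hk3 : (P ∩ R).card ≠ 3 := by
    intro h
    have h1 : P ∩ R = P := Finset.eq_of_subset_of_card_le Finset.inter_subset_left (by omega)
    have h2 : P ⊆ R := by rw [← h1]; exact Finset.inter_subset_right
    exact hRP (Finset.eq_of_subset_of_card_le h2 (by omega)).symm
  have hk0 : (P ∩ R).card ≠ 0 := by
    intro h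
    have hemp : P ∩ R = ∅ := Finset.card_eq_zero.1 h
    have hsub : R ⊆ Y6 \ P := by
      intro z hz
      refine Finset.mem_sdiff.2 ⟨hR6 hz, fun hzP => ?_⟩
      have : z ∈ P ∩ R := Finset.mem_inter.2 ⟨hzP, hz⟩
      rw [hemp] at this
      exact Finset.notMem_empty z this
    have hcYP : (Y6 \ P).card = 3 := by rw [Finset.card_sdiff_of_subset hP6, card_Y6, hPc]
    exact hRP' (Finset.eq_of_subset_of_card_le hsub (by omega))
  rcases Nat.lt_or_ge (P ∩ R).card 2 with hlt | hge
  · -- card = 1 : replace R by its complement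
    have hk1 : (P ∩ R).card = 1 := by omega
    have hR'6 : Y6 \ R ⊆ Y6 := Finset.sdiff_subset
    have hR'c : (Y6 \ R).card = 3 := by rw [Finset.card_sdiff_of_subset hR6, card_Y6, hRc]
    have hk' : (P ∩ (Y6 \ R)).card = 2 := by
      have hsplit : P ∩ (Y6 \ R) = P \ R := by
        ext z
        simp only [Finset.mem_inter, Finset.mem_sdiff]
        exact ⟨fun ⟨h1, _, h3⟩ => ⟨h1, h3⟩, fun ⟨h1, h2⟩ => ⟨h1, hP6 h1, h2⟩⟩
      rw [hsplit]
      have := Finset.card_sdiff_add_card_inter P R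
      omega
    obtain ⟨W, hWm, hWt⟩ := hreR
    exact case_III_core hn hSS hInj hno hP6 hPc hR'6 hR'c hk' hreP
      ⟨W, hWm, trace_compl hR6 hWt⟩
  · exact case_III_core hn hSS hInj hno hP6 hPc hR6 hRc (by omega) hreP hreR

lemma edge_incomp {n : ℕ} {S T : Finset (Finset ℕ)} {a b : Finset ℕ}
    (hS : IsSplit (Finset.Icc 1 n) S) (hT : IsSplit (Finset.Icc 1 n) T)
    (ha6 : a ⊆ Y6) (hb6 : b ⊆ Y6) (hca : a.card = 2) (hcb : b.card = 2) (hab : a ≠ b)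
    (hcom : ∃ z, z ∈ a ∧ z ∈ b) (hta : TraceIs S a) (htb : TraceIs T b) :
    Incompatible S T := by
  obtain ⟨p1, hp1⟩ := hcom
  obtain ⟨p2, hp2a, hp2b⟩ := two_sdiff_nonempty hca hcb hab
  obtain ⟨p3, hp3b, hp3a⟩ := two_sdiff_nonempty hcb hca (Ne.symm hab)
  obtain ⟨p4, hp4⟩ := exists_outside ha6 hb6 (by omega) hcb
  exact trace_incomp hS hT hta htb hp1 ⟨hp2a, ha6 hp2a, hp2b⟩
    ⟨hp3b, hb6 hp3b, hp3a⟩ hp4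

lemma cross_P_incomp {n : ℕ} {S V : Finset (Finset ℕ)} {e P : Finset ℕ}
    (hS : IsSplit (Finset.Icc 1 n) S) (hV : IsSplit (Finset.Icc 1 n) V)
    (he6 : e ⊆ Y6) (hP6 : P ⊆ Y6) (hce : e.card = 2) (hPc : P.card = 3)
    (hk : (e ∩ P).card = 1) (hte : TraceIs S e) (htP : TraceIs V P) :
    Incompatible S V := by
  obtain ⟨p1, hp1⟩ := Finset.card_pos.1 (by omega : 0 < (e ∩ P).card)
  have hde : 0 < (e \ P).card := by
    have := Finset.card_sdiff_add_card_inter e P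
    omega
  obtain ⟨p2, hp2⟩ := Finset.card_pos.1 hde
  have hdP : 0 < (P \ e).card := by
    have := Finset.card_sdiff_add_card_inter P e
    rw [Finset.inter_comm] at this
    omega
  obtain ⟨p3, hp3⟩ := Finset.card_pos.1 hdP
  have hout : 0 < (Y6 \ (e ∪ P)).card := by
    have h1 := Finset.card_union_add_card_inter e P
    have h2 : e ∪ P ⊆ Y6 := Finset.union_subset he6 hP6
    rw [Finset.card_sdiff_of_subset h2, card_Y6]
    omega
  obtain ⟨p4, hp4⟩ := Finset.card_pos.1 hout
  have hp4' := Finset.mem_sdiff.1 hp4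
  rw [Finset.mem_union] at hp4'
  exact trace_incomp hS hV hte htP (Finset.mem_inter.1 hp1)
    ⟨(Finset.mem_sdiff.1 hp2).1, he6 (Finset.mem_sdiff.1 hp2).1, (Finset.mem_sdiff.1 hp2).2⟩
    ⟨(Finset.mem_sdiff.1 hp3).1, hP6 (Finset.mem_sdiff.1 hp3).1, (Finset.mem_sdiff.1 hp3).2⟩
    ⟨hp4'.1, fun h => hp4'.2 (Or.inl h), fun h => hp4'.2 (Or.inr h)⟩

lemma case_II {n : ℕ} {𝒮 : Finset (Finset (Finset ℕ))} (hn : 6 ≤ n)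
    (hSS : IsSplitSystem (Finset.Icc 1 n) 𝒮) (hInj : IsInjective (Finset.Icc 1 n) 𝒮)
    (hno : ∀ S1 ∈ 𝒮, ∀ S2 ∈ 𝒮, ∀ S3 ∈ 𝒮,
      ¬(Incompatible S1 S2 ∧ Incompatible S1 S3 ∧ Incompatible S2 S3))
    {P : Finset ℕ} (hP6 : P ⊆ Y6) (hPc : P.card = 3)
    (hreP : ∃ V ∈ 𝒮, TraceIs V P)
    (huniq : ∀ R, R ⊆ Y6 → R.card = 3 → (∃ S ∈ 𝒮, TraceIs S R) → R = P ∨ R = Y6 \ P) :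
    False := by
  classical
  obtain ⟨V, hV, htrP⟩ := hreP
  have hspV := hSS.1 V hV
  set Cross : Finset ℕ → Prop :=
    fun e => e ⊆ Y6 ∧ e.card = 2 ∧ (e ∩ P).card = 1 ∧ ∃ S ∈ 𝒮, TraceIs S e with hCross
  have h3gen : ∀ x y : ℕ, x ∈ P → y ∈ P → ∀ S ∈ 𝒮, ∀ e, e ⊆ Y6 → e.card = 3 →
      TraceIs S e → ¬(x ∈ e ∧ y ∉ e) := by
    rintro x y hx hy S hS e he6 hc3 htr ⟨hxe, hye⟩
    rcases huniq e he6 hc3 ⟨S, hS, htr⟩ with rfl | rfl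
    · exact hye hy
    · exact (Finset.mem_sdiff.1 hxe).2 hx
  have cross_conflict : ∀ e f, Cross e → Cross f → e ≠ f → (∃ z, z ∈ e ∧ z ∈ f) → False := by
    rintro e f ⟨he6, hce, hke, Se, hSe, hte⟩ ⟨hf6, hcf, hkf, Sf, hSf, htf⟩ hef hcom
    have hspe := hSS.1 Se hSe
    have hspf := hSS.1 Sf hSf
    exact hno Se hSe Sf hSf V hV
      ⟨edge_incomp hspe hspf he6 hf6 hce hcf hef hcom hte htf,
       cross_P_incomp hspe hspV he6 hP6 hce hPc hke hte htrP,
       cross_P_incomp hspf hspV hf6 hP6 hcf hPc hkf htf htrP⟩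
  have cross_of_pair : ∀ w z : ℕ, w ∈ P → z ∈ Y6 → z ∉ P →
      (∃ S ∈ 𝒮, TraceIs S {w, z}) → Cross {w, z} := by
    intro w z hw hz6 hzP hre
    have hwz : w ≠ z := fun h => hzP (h ▸ hw)
    refine ⟨?_, ?_, ?_, hre⟩
    · intro t ht
      rcases Finset.mem_insert.1 ht with rfl | ht
      · exact hP6 hw
      · rw [Finset.mem_singleton] at ht; subst ht; exact hz6
    · rw [Finset.card_insert_of_notMem (by simp [hwz]), Finset.card_singleton]
    · have heq : ({w, z} : Finset ℕ) ∩ P = {w} := by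
        ext t
        simp only [Finset.mem_inter, Finset.mem_insert, Finset.mem_singleton]
        constructor
        · rintro ⟨rfl | rfl, htP⟩
          · rfl
          · exact absurd htP hzP
        · rintro rfl
          exact ⟨Or.inl rfl, hw⟩
      rw [heq, Finset.card_singleton]
  by_cases hcov : ∀ x ∈ P, ∃ e, Cross e ∧ x ∈ e
  · -- II(c) : every point of P is covered by a crossing edge
    obtain ⟨a, b, c, hab, hac, hbc, hPabc⟩ := Finset.card_eq_three.1 hPc
    have haP : a ∈ P := by rw [hPabc]; simp
    have hbP : b ∈ P := by rw [hPabc]; simp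
    have hcP : c ∈ P := by rw [hPabc]; simp
    have partner : ∀ x ∈ P, ∃ dx, dx ∈ Y6 ∧ dx ∉ P ∧ dx ≠ x ∧ Cross {x, dx} := by
      intro x hx
      obtain ⟨e, hCe, hxe⟩ := hcov x hx
      obtain ⟨he6, hce, hke, hre⟩ := hCe
      obtain ⟨z1, z2, h12, hez⟩ := Finset.card_eq_two.1 hce
      have hxPm : x ∈ e ∩ P := Finset.mem_inter.2 ⟨hxe, hx⟩
      obtain ⟨w, hw⟩ := Finset.card_eq_one.1 hke
      have hwx : w = x := by
        have := hxPm; rw [hw, Finset.mem_singleton] at this; exact this.symm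
      rw [hwx] at hw
      have hxz : x = z1 ∨ x = z2 := by
        have := hxe; rw [hez] at this; simpa using this
      rcases hxz with rfl | rfl
      · refine ⟨z2, he6 (by rw [hez]; simp), ?_, Ne.symm h12, ?_⟩
        · intro hz2P
          have : z2 ∈ e ∩ P := Finset.mem_inter.2 ⟨by rw [hez]; simp, hz2P⟩
          rw [hw, Finset.mem_singleton] at this
          exact h12 this.symm
        · rw [← hez]; exact ⟨he6, hce, hke, hre⟩
      · refine ⟨z1, he6 (by rw [hez]; simp), ?_, h12, ?_⟩
        · intro hz1P
          have : z1 ∈ e ∩ P := Finset.mem_inter.2 ⟨by rw [hez]; simp, hz1P⟩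
          rw [hw, Finset.mem_singleton] at this
          exact h12 this
        · rw [Finset.pair_comm, ← hez]; exact ⟨he6, hce, hke, hre⟩
    obtain ⟨da, hda6, hdaP, hdaa, hCda⟩ := partner a haP
    obtain ⟨db, hdb6, hdbP, hdbb, hCdb⟩ := partner b hbP
    obtain ⟨dc, hdc6, hdcP, hdcc, hCdc⟩ := partner c hcP
    have getedge : ∀ x y w dw : ℕ, x ∈ P → y ∈ P → w ∈ P → dw ∈ Y6 → dw ∉ P →
        dw ≠ w → x ≠ y → x ≠ w → y ≠ w → Cross {w, dw} →
        ∃ g, (∃ S ∈ 𝒮, TraceIs S g) ∧ (g = {w, x} ∨ g = {w, y}) := by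
      intro x y w dw hx hy hw hdw6 hdwP hdww hxy hxw hyw hCwdw
      obtain ⟨S, hS, g, hg6, hcg, htg, hsep1, hsep2⟩ := QT2 hn hSS hInj
        (hP6 hx) (hP6 hy) (hP6 hw) hdw6 hxy hxw
        (fun h => hdwP (h ▸ hx)) hyw (fun h => hdwP (h ▸ hy))
        (fun h => hdwP (h ▸ hw)) (h3gen x y hx hy)
      rcases hsep1 with ⟨hxg, hyg⟩ | ⟨hyg, hxg⟩ <;> rcases hsep2 with ⟨hwg, hdwg⟩ | ⟨hdwg, hwg⟩
      · exact ⟨g, ⟨S, hS, htg⟩, Or.inl (pair_eq_of_mem hcg hwg hxg (Ne.symm hxw))⟩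
      · exfalso
        have hgeq : g = {x, dw} := pair_eq_of_mem hcg hxg hdwg (fun h => hdwP (h ▸ hx))
        refine cross_conflict g {w, dw} ?_ hCwdw ?_ ⟨dw, hdwg, by simp⟩
        · rw [hgeq]
          exact cross_of_pair x dw hx hdw6 hdwP ⟨S, hS, hgeq ▸ htg⟩
        · rw [hgeq]
          intro hEq
          have : x ∈ ({w, dw} : Finset ℕ) := by rw [← hEq]; simp
          rcases Finset.mem_insert.1 this with rfl | h
          · exact hxw rfl
          · rw [Finset.mem_singleton] at h; exact hdwP (h ▸ hx)
      · exact ⟨g, ⟨S, hS, htg⟩, Or.inr (pair_eq_of_mem hcg hwg hyg (Ne.symm hyw))⟩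
      · exfalso
        have hgeq : g = {y, dw} := pair_eq_of_mem hcg hyg hdwg (fun h => hdwP (h ▸ hy))
        refine cross_conflict g {w, dw} ?_ hCwdw ?_ ⟨dw, hdwg, by simp⟩
        · rw [hgeq]
          exact cross_of_pair y dw hy hdw6 hdwP ⟨S, hS, hgeq ▸ htg⟩
        · rw [hgeq]
          intro hEq
          have : y ∈ ({w, dw} : Finset ℕ) := by rw [← hEq]; simp
          rcases Finset.mem_insert.1 this with rfl | h
          · exact hyw rfl
          · rw [Finset.mem_singleton] at h; exact hdwP (h ▸ hy)
    obtain ⟨ga, hga_re, hga⟩ := getedge b c a da hbP hcP haP hda6 hdaP hdaa hbc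
      (Ne.symm hab) (Ne.symm hac) hCda
    obtain ⟨gb, hgb_re, hgb⟩ := getedge a c b db haP hcP hbP hdb6 hdbP hdbb hac
      hab (Ne.symm hbc) hCdb
    obtain ⟨gc, hgc_re, hgc⟩ := getedge a b c dc haP hbP hcP hdc6 hdcP hdcc hab
      hac hbc hCdc
    have comm_re : ∀ z1 z2 : ℕ, (∃ S ∈ 𝒮, TraceIs S ({z1, z2} : Finset ℕ)) →
        ∃ S ∈ 𝒮, TraceIs S ({z2, z1} : Finset ℕ) := by
      intro z1 z2 h; rwa [Finset.pair_comm]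
    have finisher : ∀ w p q dw : ℕ, w ∈ P → p ∈ P → q ∈ P → dw ∈ Y6 → dw ∉ P →
        p ≠ q → w ≠ p → w ≠ q → dw ≠ w →
        (∃ S ∈ 𝒮, TraceIs S {w, p}) → (∃ S ∈ 𝒮, TraceIs S {w, q}) →
        Cross {w, dw} → False := by
      intro w p q dw hw hp hq hdw6 hdwP hpq hwp hwq hdww hre1 hre2 hCx
      obtain ⟨-, -, -, hre3⟩ := hCx
      have hsub : ∀ z1 z2 : ℕ, z1 ∈ Y6 → z2 ∈ Y6 → ({z1, z2} : Finset ℕ) ⊆ Y6 := by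
        intro z1 z2 h1 h2 t ht
        rcases Finset.mem_insert.1 ht with rfl | ht
        · exact h1
        · rw [Finset.mem_singleton] at ht; subst ht; exact h2
      have hcd : ∀ z1 z2 : ℕ, z1 ≠ z2 → ({z1, z2} : Finset ℕ).card = 2 := by
        intro z1 z2 h
        rw [Finset.card_insert_of_notMem (by simp [h]), Finset.card_singleton]
      have hne1 : ({w, p} : Finset ℕ) ≠ {w, q} := by
        intro hEq
        have : p ∈ ({w, q} : Finset ℕ) := by rw [← hEq]; simp
        rcases Finset.mem_insert.1 this with rfl | h
        · exact hwp rfl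
        · rw [Finset.mem_singleton] at h; exact hpq h
      have hne2 : ({w, p} : Finset ℕ) ≠ {w, dw} := by
        intro hEq
        have : p ∈ ({w, dw} : Finset ℕ) := by rw [← hEq]; simp
        rcases Finset.mem_insert.1 this with rfl | h
        · exact hwp rfl
        · rw [Finset.mem_singleton] at h; exact hdwP (h ▸ hp)
      have hne3 : ({w, q} : Finset ℕ) ≠ {w, dw} := by
        intro hEq
        have : q ∈ ({w, dw} : Finset ℕ) := by rw [← hEq]; simp
        rcases Finset.mem_insert.1 this with rfl | h
        · exact hwq rfl
        · rw [Finset.mem_singleton] at h; exact hdwP (h ▸ hq)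
      exact three_edges hSS hno (hsub w p (hP6 hw) (hP6 hp)) (hsub w q (hP6 hw) (hP6 hq))
        (hsub w dw (hP6 hw) hdw6) (hcd w p hwp) (hcd w q hwq) (hcd w dw (Ne.symm hdww))
        hne1 hne2 hne3 ⟨w, by simp, by simp⟩ ⟨w, by simp, by simp⟩ ⟨w, by simp, by simp⟩
        hre1 hre2 hre3
    rcases hga with rfl | rfl <;> rcases hgb with hb' | hb'
    · -- ga = {a,b}, gb = {b,a}
      rcases hgc with hc' | hc'
      · -- gc = {c,a} : center a with {a,b}, {a,c}
        exact finisher a b c da haP hbP hcP hda6 hdaP hbc hab hac hdaa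
          hga_re (comm_re c a (hc' ▸ hgc_re)) hCda
      · -- gc = {c,b} : center b with {b,a}, {b,c}
        exact finisher b a c db hbP haP hcP hdb6 hdbP hac (Ne.symm hab) hbc hdbb
          (hb' ▸ hgb_re) (comm_re c b (hc' ▸ hgc_re)) hCdb
    · -- ga = {a,b}, gb = {b,c} : center b
      exact finisher b a c db hbP haP hcP hdb6 hdbP hac (Ne.symm hab) hbc hdbb
        (comm_re a b hga_re) (hb' ▸ hgb_re) hCdb
    · -- ga = {a,c}, gb = {b,a} : center a
      exact finisher a b c da haP hbP hcP hda6 hdaP hbc hab hac hdaa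
        (comm_re b a (hb' ▸ hgb_re)) hga_re hCda
    · -- ga = {a,c}, gb = {b,c} : center c
      exact finisher c a b dc hcP haP hbP hdc6 hdcP hab (Ne.symm hac) (Ne.symm hbc) hdcc
        (comm_re a c hga_re) (comm_re b c (hb' ▸ hgb_re)) hCdc
  · -- II(d) : some x3 ∈ P is uncovered
    push_neg at hcov
    obtain ⟨x3, hx3P, hx3un'⟩ := hcov
    have hx3un : ∀ e, Cross e → x3 ∉ e := by
      intro e hCe hx3e
      obtain ⟨e', hCe', hxe'⟩ := by exact (⟨e, hCe, hx3e⟩ : ∃ e, Cross e ∧ x3 ∈ e)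
      exact hx3un' e' hCe' hxe'
    have hYPc : (Y6 \ P).card = 3 := by rw [Finset.card_sdiff_of_subset hP6, card_Y6, hPc]
    have getw : ∀ e z, Cross e → z ∈ e → z ∉ P → ∃ w, w ∈ P ∧ w ≠ x3 ∧ e = {z, w} := by
      intro e z hCe hze hzP
      obtain ⟨he6, hce, hke, hre⟩ := hCe
      obtain ⟨w, hw⟩ := Finset.card_eq_one.1 hke
      have hwm : w ∈ e ∩ P := by rw [hw]; exact Finset.mem_singleton_self w
      have hwP := (Finset.mem_inter.1 hwm).2
      have hwe := (Finset.mem_inter.1 hwm).1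
      have hwx3 : w ≠ x3 := fun h => hx3un e ⟨he6, hce, hke, hre⟩ (h ▸ hwe)
      have hzw : z ≠ w := fun h => hzP (h ▸ hwP)
      exact ⟨w, hwP, hwx3, pair_eq_of_mem hce hze hwe hzw⟩
    have hu3 : ∃ u3 ∈ Y6 \ P, ∀ e, Cross e → u3 ∉ e := by
      by_contra hcon
      push_neg at hcon
      obtain ⟨z1, z2, z3, h12, h13, h23, hZ⟩ := Finset.card_eq_three.1 hYPc
      have hz1 : z1 ∈ Y6 \ P := by rw [hZ]; simp
      have hz2 : z2 ∈ Y6 \ P := by rw [hZ]; simp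
      have hz3 : z3 ∈ Y6 \ P := by rw [hZ]; simp
      obtain ⟨e1, hCe1, hz1e1⟩ := hcon z1 hz1
      obtain ⟨e2, hCe2, hz2e2⟩ := hcon z2 hz2
      obtain ⟨e3, hCe3, hz3e3⟩ := hcon z3 hz3
      obtain ⟨w1, hw1P, hw1x3, he1eq⟩ := getw e1 z1 hCe1 hz1e1 (Finset.mem_sdiff.1 hz1).2
      obtain ⟨w2, hw2P, hw2x3, he2eq⟩ := getw e2 z2 hCe2 hz2e2 (Finset.mem_sdiff.1 hz2).2
      obtain ⟨w3, hw3P, hw3x3, he3eq⟩ := getw e3 z3 hCe3 hz3e3 (Finset.mem_sdiff.1 hz3).2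
      have hPx3c : (P.erase x3).card = 2 := by rw [Finset.card_erase_of_mem hx3P, hPc]
      obtain ⟨p1, p2, hp12, hPe⟩ := Finset.card_eq_two.1 hPx3c
      have hmem : ∀ w : ℕ, w ∈ P → w ≠ x3 → w = p1 ∨ w = p2 := by
        intro w hw hwx
        have : w ∈ P.erase x3 := Finset.mem_erase.2 ⟨hwx, hw⟩
        rw [hPe] at this; simpa using this
      have conflict2 : ∀ (za zb w : ℕ) (ea eb : Finset ℕ), za ≠ zb → za ∉ P → w ∈ P →
          Cross ea → Cross eb → ea = {za, w} → eb = {zb, w} → False := by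
        intro za zb w ea eb hzz hzaP hwP hCa hCb hea heb
        refine cross_conflict ea eb hCa hCb ?_ ⟨w, by rw [hea]; simp, by rw [heb]; simp⟩
        rw [hea, heb]
        intro hEq
        have : za ∈ ({zb, w} : Finset ℕ) := by rw [← hEq]; simp
        rcases Finset.mem_insert.1 this with rfl | h
        · exact hzz rfl
        · rw [Finset.mem_singleton] at h; exact hzaP (h ▸ hwP)
      have hww : w1 = w2 ∨ w1 = w3 ∨ w2 = w3 := by
        rcases hmem w1 hw1P hw1x3 with h1 | h1 <;>
          rcases hmem w2 hw2P hw2x3 with h2 | h2 <;>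
          rcases hmem w3 hw3P hw3x3 with h3 | h3 <;> simp [h1, h2, h3]
      rcases hww with h | h | h
      · exact conflict2 z1 z2 w2 e1 e2 h12 (Finset.mem_sdiff.1 hz1).2 hw2P hCe1 hCe2
          (h ▸ he1eq) he2eq
      · exact conflict2 z1 z3 w3 e1 e3 h13 (Finset.mem_sdiff.1 hz1).2 hw3P hCe1 hCe3
          (h ▸ he1eq) he3eq
      · exact conflict2 z2 z3 w3 e2 e3 h23 (Finset.mem_sdiff.1 hz2).2 hw3P hCe2 hCe3
          (h ▸ he2eq) he3eq
    obtain ⟨u3, hu3m, hu3un⟩ := hu3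
    have hu36 := (Finset.mem_sdiff.1 hu3m).1
    have hu3P := (Finset.mem_sdiff.1 hu3m).2
    have hPx3pos : 0 < (P.erase x3).card := by
      rw [Finset.card_erase_of_mem hx3P, hPc]; omega
    obtain ⟨p, hp⟩ := (Finset.card_pos (s := P.erase x3)).1 hPx3pos
    have hpx3 := (Finset.mem_erase.1 hp).1
    have hpP := (Finset.mem_erase.1 hp).2
    have hqex : ∃ q, q ∈ Y6 ∧ q ∉ P ∧ q ≠ u3 ∧ ¬ Cross {p, q} := by
      have hc2 : ((Y6 \ P).erase u3).card = 2 := by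
        rw [Finset.card_erase_of_mem hu3m, hYPc]
      obtain ⟨q1, q2, hq12, hqe⟩ := Finset.card_eq_two.1 hc2
      have hq1m : q1 ∈ (Y6 \ P).erase u3 := by rw [hqe]; simp
      have hq2m : q2 ∈ (Y6 \ P).erase u3 := by rw [hqe]; simp
      have hq1u := (Finset.mem_erase.1 hq1m).1
      have hq1s := Finset.mem_sdiff.1 (Finset.mem_erase.1 hq1m).2
      have hq2u := (Finset.mem_erase.1 hq2m).1
      have hq2s := Finset.mem_sdiff.1 (Finset.mem_erase.1 hq2m).2
      by_cases hC1 : Cross {p, q1}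
      · by_cases hC2 : Cross {p, q2}
        · exfalso
          refine cross_conflict {p, q1} {p, q2} hC1 hC2 ?_ ⟨p, by simp, by simp⟩
          intro hEq
          have : q1 ∈ ({p, q2} : Finset ℕ) := by rw [← hEq]; simp
          rcases Finset.mem_insert.1 this with rfl | h
          · exact hq1s.2 hpP
          · rw [Finset.mem_singleton] at h; exact hq12 h
        · exact ⟨q2, hq2s.1, hq2s.2, hq2u, hC2⟩
      · exact ⟨q1, hq1s.1, hq1s.2, hq1u, hC1⟩
    obtain ⟨q, hq6, hqP, hqu3, hqC⟩ := hqex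
    obtain ⟨S, hS, g, hg6, hcg, htg, hs1, hs2⟩ := QT2 hn hSS hInj
      (hP6 hx3P) (hP6 hpP) hu36 hq6
      (fun h => hpx3 h.symm) (fun h => hu3P (h ▸ hx3P)) (fun h => hqP (h ▸ hx3P))
      (fun h => hu3P (h ▸ hpP)) (fun h => hqP (h ▸ hpP)) (fun h => hqu3 h.symm)
      (h3gen x3 p hx3P hpP)
    rcases hs1 with ⟨hx3g, hpg⟩ | ⟨hpg, hx3g⟩ <;> rcases hs2 with ⟨hu3g, hqg⟩ | ⟨hqg, hu3g⟩
    · have hgeq : g = {x3, u3} := pair_eq_of_mem hcg hx3g hu3g (fun h => hu3P (h ▸ hx3P))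
      have : Cross g := by
        rw [hgeq]; exact cross_of_pair x3 u3 hx3P hu36 hu3P ⟨S, hS, hgeq ▸ htg⟩
      exact hx3un g this hx3g
    · have hgeq : g = {x3, q} := pair_eq_of_mem hcg hx3g hqg (fun h => hqP (h ▸ hx3P))
      have : Cross g := by
        rw [hgeq]; exact cross_of_pair x3 q hx3P hq6 hqP ⟨S, hS, hgeq ▸ htg⟩
      exact hx3un g this hx3g
    · have hgeq : g = {p, u3} := pair_eq_of_mem hcg hpg hu3g (fun h => hu3P (h ▸ hpP))
      have : Cross g := by
        rw [hgeq]; exact cross_of_pair p u3 hpP hu36 hu3P ⟨S, hS, hgeq ▸ htg⟩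
      exact hu3un g this hu3g
    · have hgeq : g = {p, q} := pair_eq_of_mem hcg hpg hqg (fun h => hqP (h ▸ hpP))
      refine hqC ?_
      rw [← hgeq]
      exact ⟨hg6, hcg, by
        have heq : g ∩ P = {p} := by
          ext t
          rw [hgeq]
          simp only [Finset.mem_inter, Finset.mem_insert, Finset.mem_singleton]
          constructor
          · rintro ⟨rfl | rfl, htP⟩
            · rfl
            · exact absurd htP hqP
          · rintro rfl
            exact ⟨Or.inl rfl, hpP⟩
        rw [heq, Finset.card_singleton], S, hS, htg⟩


lemma trace_re_comm {𝒮 : Finset (Finset (Finset ℕ))} {z1 z2 : ℕ}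
    (h : ∃ S ∈ 𝒮, TraceIs S {z1, z2}) : ∃ S ∈ 𝒮, TraceIs S {z2, z1} := by
  rwa [Finset.pair_comm]

lemma other_elem {s : Finset ℕ} {x : ℕ} (hc : s.card = 2) (hx : x ∈ s) :
    ∃ y, y ≠ x ∧ s = {x, y} := by
  obtain ⟨z1, z2, h12, hz⟩ := Finset.card_eq_two.1 hc
  have : x = z1 ∨ x = z2 := by rw [hz] at hx; simpa using hx
  rcases this with rfl | rfl
  · exact ⟨z2, Ne.symm h12, hz⟩
  · exact ⟨z1, h12, by rw [hz, Finset.pair_comm]⟩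

open scoped Classical in
/-- neighbours of `w` in the graph of realized 2-traces on `Y6` -/
noncomputable def NG (𝒮 : Finset (Finset (Finset ℕ))) (w : ℕ) : Finset ℕ :=
  Y6.filter fun z => z ≠ w ∧ ∃ S ∈ 𝒮, TraceIs S {w, z}

lemma mem_NG {𝒮 : Finset (Finset (Finset ℕ))} {w z : ℕ} :
    z ∈ NG 𝒮 w ↔ z ∈ Y6 ∧ z ≠ w ∧ ∃ S ∈ 𝒮, TraceIs S {w, z} := by
  classical
  simp [NG, Finset.mem_filter]

lemma NG_symm {𝒮 : Finset (Finset (Finset ℕ))} {w z : ℕ} (hw : w ∈ Y6)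
    (h : z ∈ NG 𝒮 w) : w ∈ NG 𝒮 z := by
  obtain ⟨h1, h2, h3⟩ := mem_NG.1 h
  exact mem_NG.2 ⟨hw, fun he => h2 he.symm, trace_re_comm h3⟩

lemma NG_subset {𝒮 : Finset (Finset (Finset ℕ))} {w : ℕ} : NG 𝒮 w ⊆ Y6 := by
  classical
  exact Finset.filter_subset _ _

lemma case_I {n : ℕ} {𝒮 : Finset (Finset (Finset ℕ))} (hn : 6 ≤ n)
    (hSS : IsSplitSystem (Finset.Icc 1 n) 𝒮) (hInj : IsInjective (Finset.Icc 1 n) 𝒮)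
    (hno : ∀ S1 ∈ 𝒮, ∀ S2 ∈ 𝒮, ∀ S3 ∈ 𝒮,
      ¬(Incompatible S1 S2 ∧ Incompatible S1 S3 ∧ Incompatible S2 S3))
    (hno3 : ∀ R, R ⊆ Y6 → R.card = 3 → ¬∃ S ∈ 𝒮, TraceIs S R) : False := by
  classical
  have h3triv : ∀ x y : ℕ, ∀ S ∈ 𝒮, ∀ e, e ⊆ Y6 → e.card = 3 →
      TraceIs S e → ¬(x ∈ e ∧ y ∉ e) := by
    intro x y S hS e he6 hc3 htr _
    exact hno3 e he6 hc3 ⟨S, hS, htr⟩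
  have hsubp : ∀ z1 z2 : ℕ, z1 ∈ Y6 → z2 ∈ Y6 → ({z1, z2} : Finset ℕ) ⊆ Y6 := by
    intro z1 z2 h1 h2 t ht
    rcases Finset.mem_insert.1 ht with rfl | ht
    · exact h1
    · rw [Finset.mem_singleton] at ht; subst ht; exact h2
  have hcdp : ∀ z1 z2 : ℕ, z1 ≠ z2 → ({z1, z2} : Finset ℕ).card = 2 := by
    intro z1 z2 h
    rw [Finset.card_insert_of_notMem (by simp [h]), Finset.card_singleton]
  have hpairne : ∀ w z1 z2 : ℕ, z1 ≠ z2 → z1 ∉ ({w, z2} : Finset ℕ) →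
      ({w, z1} : Finset ℕ) ≠ {w, z2} := by
    intro w z1 z2 h12 hz1 hEq
    exact hz1 (hEq ▸ (by simp : z1 ∈ ({w, z1} : Finset ℕ)))
  -- max degree 2
  have NDle : ∀ w : ℕ, w ∈ Y6 → (NG 𝒮 w).card ≤ 2 := by
    intro w hw
    by_contra hcon
    push_neg at hcon
    obtain ⟨z1, hz1, z2, hz2, z3, hz3, h12, h13, h23⟩ := exists_three_distinct hcon
    obtain ⟨hz16, hz1w, hre1⟩ := mem_NG.1 hz1
    obtain ⟨hz26, hz2w, hre2⟩ := mem_NG.1 hz2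
    obtain ⟨hz36, hz3w, hre3⟩ := mem_NG.1 hz3
    exact three_edges hSS hno (hsubp w z1 hw hz16) (hsubp w z2 hw hz26)
      (hsubp w z3 hw hz36) (hcdp w z1 (Ne.symm hz1w)) (hcdp w z2 (Ne.symm hz2w))
      (hcdp w z3 (Ne.symm hz3w))
      (hpairne w z1 z2 h12 (by simp [hz1w, h12]))
      (hpairne w z1 z3 h13 (by simp [hz1w, h13]))
      (hpairne w z2 z3 h23 (by simp [hz2w, h23]))
      ⟨w, by simp, by simp⟩ ⟨w, by simp, by simp⟩ ⟨w, by simp, by simp⟩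
      hre1 hre2 hre3
  -- every pair is blocked by a cherry
  have cherry : ∀ u v : ℕ, u ∈ Y6 → v ∈ Y6 → u ≠ v →
      ∃ w n1 n2 : ℕ, w ∈ Y6 ∧ w ≠ u ∧ w ≠ v ∧ n1 ∈ NG 𝒮 w ∧ n2 ∈ NG 𝒮 w ∧
        n1 ≠ n2 ∧ n1 ≠ u ∧ n1 ≠ v ∧ n2 ≠ u ∧ n2 ≠ v := by
    intro u v hu hv huv
    have hQc : (Y6 \ ({u, v} : Finset ℕ)).card = 4 := by
      rw [Finset.card_sdiff_of_subset (hsubp u v hu hv), card_Y6, hcdp u v huv]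
    obtain ⟨p, hp, q, hq, r, hr, s, hs, hpq, hpr, hps, hqr, hqs, hrs⟩ :=
      exists_four_distinct (le_of_eq hQc.symm)
    have hmem : ∀ z : ℕ, z ∈ Y6 \ ({u, v} : Finset ℕ) → z ∈ Y6 ∧ z ≠ u ∧ z ≠ v := by
      intro z hz
      obtain ⟨h1, h2⟩ := Finset.mem_sdiff.1 hz
      simp only [Finset.mem_insert, Finset.mem_singleton] at h2
      push_neg at h2
      exact ⟨h1, h2.1, h2.2⟩
    obtain ⟨hp6, hpu, hpv⟩ := hmem p hp
    obtain ⟨hq6, hqu, hqv⟩ := hmem q hq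
    obtain ⟨hr6, hru, hrv⟩ := hmem r hr
    obtain ⟨hs6, hsu, hsv⟩ := hmem s hs
    -- given a realized edge {α, β} inside the 4-set, produce a cherry
    have mkcherry : ∀ α β γ δ : ℕ, α ∈ Y6 → β ∈ Y6 → γ ∈ Y6 → δ ∈ Y6 →
        α ≠ u → α ≠ v → β ≠ u → β ≠ v → γ ≠ u → γ ≠ v → δ ≠ u → δ ≠ v →
        α ≠ β → α ≠ γ → α ≠ δ → β ≠ γ → β ≠ δ → γ ≠ δ →
        (∃ S ∈ 𝒮, TraceIs S {α, β}) →
        ∃ w n1 n2 : ℕ, w ∈ Y6 ∧ w ≠ u ∧ w ≠ v ∧ n1 ∈ NG 𝒮 w ∧ n2 ∈ NG 𝒮 w ∧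
          n1 ≠ n2 ∧ n1 ≠ u ∧ n1 ≠ v ∧ n2 ≠ u ∧ n2 ≠ v := by
      intro α β γ δ hα6 hβ6 hγ6 hδ6 hαu hαv hβu hβv hγu hγv hδu hδv
        hαβ hαγ hαδ hβγ hβδ hγδ hre
      obtain ⟨S, hS, g2, hg26, hcg2, htg2, hs1, hs2⟩ := QT2 hn hSS hInj hα6 hβ6 hγ6 hδ6
        hαβ hαγ hαδ hβγ hβδ hγδ (h3triv α β)
      rcases hs1 with ⟨hαg, hβg⟩ | ⟨hβg, hαg⟩ <;> rcases hs2 with ⟨hγg, hδg⟩ | ⟨hδg, hγg⟩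
      · have hg2eq : g2 = {α, γ} := pair_eq_of_mem hcg2 hαg hγg hαγ
        exact ⟨α, β, γ, hα6, hαu, hαv,
          mem_NG.2 ⟨hβ6, Ne.symm hαβ, hre⟩,
          mem_NG.2 ⟨hγ6, Ne.symm hαγ, ⟨S, hS, hg2eq ▸ htg2⟩⟩, hβγ, hβu, hβv, hγu, hγv⟩
      · have hg2eq : g2 = {α, δ} := pair_eq_of_mem hcg2 hαg hδg hαδ
        exact ⟨α, β, δ, hα6, hαu, hαv,
          mem_NG.2 ⟨hβ6, Ne.symm hαβ, hre⟩,
          mem_NG.2 ⟨hδ6, Ne.symm hαδ, ⟨S, hS, hg2eq ▸ htg2⟩⟩, hβδ, hβu, hβv, hδu, hδv⟩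
      · have hg2eq : g2 = {β, γ} := pair_eq_of_mem hcg2 hβg hγg hβγ
        exact ⟨β, α, γ, hβ6, hβu, hβv,
          mem_NG.2 ⟨hα6, hαβ, trace_re_comm hre⟩,
          mem_NG.2 ⟨hγ6, Ne.symm hβγ, ⟨S, hS, hg2eq ▸ htg2⟩⟩, hαγ, hαu, hαv, hγu, hγv⟩
      · have hg2eq : g2 = {β, δ} := pair_eq_of_mem hcg2 hβg hδg hβδ
        exact ⟨β, α, δ, hβ6, hβu, hβv,
          mem_NG.2 ⟨hα6, hαβ, trace_re_comm hre⟩,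
          mem_NG.2 ⟨hδ6, Ne.symm hβδ, ⟨S, hS, hg2eq ▸ htg2⟩⟩, hαδ, hαu, hαv, hδu, hδv⟩
    obtain ⟨S, hS, g1, hg16, hcg1, htg1, ht1, ht2⟩ := QT2 hn hSS hInj hp6 hq6 hr6 hs6
      hpq hpr hps hqr hqs hrs (h3triv p q)
    rcases ht1 with ⟨hpg, hqg⟩ | ⟨hqg, hpg⟩ <;> rcases ht2 with ⟨hrg, hsg⟩ | ⟨hsg, hrg⟩
    · have hg1eq : g1 = {p, r} := pair_eq_of_mem hcg1 hpg hrg hpr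
      exact mkcherry p r q s hp6 hr6 hq6 hs6 hpu hpv hru hrv hqu hqv hsu hsv
        hpr hpq hps (Ne.symm hqr) hrs hqs ⟨S, hS, hg1eq ▸ htg1⟩
    · have hg1eq : g1 = {p, s} := pair_eq_of_mem hcg1 hpg hsg hps
      exact mkcherry p s q r hp6 hs6 hq6 hr6 hpu hpv hsu hsv hqu hqv hru hrv
        hps hpq hpr (Ne.symm hqs) (Ne.symm hrs) hqr ⟨S, hS, hg1eq ▸ htg1⟩
    · have hg1eq : g1 = {q, r} := pair_eq_of_mem hcg1 hqg hrg hqr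
      exact mkcherry q r p s hq6 hr6 hp6 hs6 hqu hqv hru hrv hpu hpv hsu hsv
        hqr (Ne.symm hpq) hqs (Ne.symm hpr) hrs hps ⟨S, hS, hg1eq ▸ htg1⟩
    · have hg1eq : g1 = {q, s} := pair_eq_of_mem hcg1 hqg hsg hqs
      exact mkcherry q s p r hq6 hs6 hp6 hr6 hqu hqv hsu hsv hpu hpv hru hrv
        hqs (Ne.symm hpq) hqr (Ne.symm hps) (Ne.symm hrs) hpr
        ⟨S, hS, hg1eq ▸ htg1⟩
  -- the centre set
  set C : Finset ℕ := Y6.filter (fun w => 2 ≤ (NG 𝒮 w).card) with hC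
  have hCsub : C ⊆ Y6 := Finset.filter_subset _ _
  have hwNG : ∀ w : ℕ, w ∉ NG 𝒮 w := fun w hw => (mem_NG.1 hw).2.1 rfl
  have hBcard : ∀ w ∈ C, (insert w (NG 𝒮 w)).card = 3 := by
    intro w hwC
    obtain ⟨hw6, hw2⟩ := Finset.mem_filter.1 hwC
    rw [Finset.card_insert_of_notMem (hwNG w)]
    have := NDle w hw6
    omega
  have hBsub : ∀ w ∈ Y6, insert w (NG 𝒮 w) ⊆ Y6 := by
    intro w hw6 z hz
    rcases Finset.mem_insert.1 hz with rfl | hz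
    · exact hw6
    · exact NG_subset hz
  have blocked : ∀ u v : ℕ, u ∈ Y6 → v ∈ Y6 → u ≠ v →
      ∃ w ∈ C, u ∉ insert w (NG 𝒮 w) ∧ v ∉ insert w (NG 𝒮 w) := by
    intro u v hu hv huv
    obtain ⟨w, n1, n2, hw6, hwu, hwv, hn1, hn2, h12, hn1u, hn1v, hn2u, hn2v⟩ :=
      cherry u v hu hv huv
    have hsubN : ({n1, n2} : Finset ℕ) ⊆ NG 𝒮 w := by
      intro z hz
      rcases Finset.mem_insert.1 hz with rfl | hz
      · exact hn1
      · rw [Finset.mem_singleton] at hz; subst hz; exact hn2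
    have hNeq : ({n1, n2} : Finset ℕ) = NG 𝒮 w :=
      Finset.eq_of_subset_of_card_le hsubN (by rw [hcdp n1 n2 h12]; exact NDle w hw6)
    have hwC : w ∈ C := Finset.mem_filter.2 ⟨hw6, by
      rw [← hNeq, hcdp n1 n2 h12]⟩
    refine ⟨w, hwC, ?_, ?_⟩
    · intro hmem
      rcases Finset.mem_insert.1 hmem with rfl | hmem
      · exact hwu rfl
      · rw [← hNeq] at hmem
        rcases Finset.mem_insert.1 hmem with rfl | hmem
        · exact hn1u rfl
        · rw [Finset.mem_singleton] at hmem; subst hmem; exact hn2u rfl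
    · intro hmem
      rcases Finset.mem_insert.1 hmem with rfl | hmem
      · exact hwv rfl
      · rw [← hNeq] at hmem
        rcases Finset.mem_insert.1 hmem with rfl | hmem
        · exact hn1v rfl
        · rw [Finset.mem_singleton] at hmem; subst hmem; exact hn2v rfl
  -- counting, part 1 : each point avoids at least three cherries
  have hCp : ∀ p ∈ Y6, 3 ≤ (C.filter (fun w => p ∉ insert w (NG 𝒮 w))).card := by
    intro p hp6
    set Cp := C.filter (fun w => p ∉ insert w (NG 𝒮 w)) with hCpdef
    have hcov : Y6.erase p ⊆ Cp.biUnion (fun w => (Y6.erase p) \ insert w (NG 𝒮 w)) := by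
      intro q hq
      have hq6 := (Finset.mem_erase.1 hq).2
      have hqp := (Finset.mem_erase.1 hq).1
      obtain ⟨w, hwC, hpB, hqB⟩ := blocked p q hp6 hq6 (Ne.symm hqp)
      exact Finset.mem_biUnion.2 ⟨w, Finset.mem_filter.2 ⟨hwC, hpB⟩,
        Finset.mem_sdiff.2 ⟨hq, hqB⟩⟩
    have h5 : (Y6.erase p).card = 5 := by rw [Finset.card_erase_of_mem hp6, card_Y6]
    have hbound : ∀ w ∈ Cp, ((Y6.erase p) \ insert w (NG 𝒮 w)).card ≤ 2 := by
      intro w hw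
      obtain ⟨hwC, hpB⟩ := Finset.mem_filter.1 hw
      have hBsub' : insert w (NG 𝒮 w) ⊆ Y6.erase p := by
        intro z hz
        refine Finset.mem_erase.2 ⟨fun he => hpB (he ▸ hz), hBsub w (hCsub hwC) hz⟩
      rw [Finset.card_sdiff_of_subset hBsub', h5, hBcard w hwC]
    have hchain := Finset.card_le_card hcov
    have hbiu := Finset.card_biUnion_le (s := Cp)
      (t := fun w => (Y6.erase p) \ insert w (NG 𝒮 w))
    have hsum := Finset.sum_le_card_nsmul Cp (fun w => ((Y6.erase p) \ insert w (NG 𝒮 w)).card)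
      2 hbound
    rw [smul_eq_mul] at hsum
    omega
  -- counting, part 2 : double counting forces C = Y6
  have hdouble : ∑ p ∈ Y6, (C.filter (fun w => p ∉ insert w (NG 𝒮 w))).card
      = ∑ w ∈ C, (Y6.filter (fun p => p ∉ insert w (NG 𝒮 w))).card := by
    simp only [Finset.card_filter]
    exact Finset.sum_comm
  have h18 : 18 ≤ ∑ p ∈ Y6, (C.filter (fun w => p ∉ insert w (NG 𝒮 w))).card := by
    have := Finset.card_nsmul_le_sum Y6
      (fun p => (C.filter (fun w => p ∉ insert w (NG 𝒮 w))).card) 3 hCp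
    rw [card_Y6, smul_eq_mul] at this
    omega
  have hrhs : ∑ w ∈ C, (Y6.filter (fun p => p ∉ insert w (NG 𝒮 w))).card = 3 * C.card := by
    have heach : ∀ w ∈ C, (Y6.filter (fun p => p ∉ insert w (NG 𝒮 w))).card = 3 := by
      intro w hwC
      have heq : Y6.filter (fun p => p ∉ insert w (NG 𝒮 w)) = Y6 \ insert w (NG 𝒮 w) := by
        ext z
        simp [Finset.mem_filter, Finset.mem_sdiff]
      rw [heq, Finset.card_sdiff_of_subset (hBsub w (hCsub hwC)), card_Y6, hBcard w hwC]
    rw [Finset.sum_congr rfl heach, Finset.sum_const, smul_eq_mul, Nat.mul_comm]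
  have hC6 : C = Y6 := by
    have h1 : 18 ≤ 3 * C.card := by
      rw [← hrhs, ← hdouble]; exact h18
    have h2 : Y6.card ≤ C.card := by rw [card_Y6]; omega
    exact Finset.eq_of_subset_of_card_le hCsub h2
  have hN2 : ∀ w ∈ Y6, (NG 𝒮 w).card = 2 := by
    intro w hw
    have h1 : w ∈ C := by rw [hC6]; exact hw
    have h2 := (Finset.mem_filter.1 h1).2
    have h3 := NDle w hw
    omega
  have h1Y : (1 : ℕ) ∈ Y6 := by decide
  obtain ⟨a, b, hab, hN1⟩ := Finset.card_eq_two.1 (hN2 1 h1Y)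
  have haN1 : a ∈ NG 𝒮 1 := by rw [hN1]; simp
  have hbN1 : b ∈ NG 𝒮 1 := by rw [hN1]; simp
  obtain ⟨ha6, ha1, hrea⟩ := mem_NG.1 haN1
  obtain ⟨hb6, hb1, hreb⟩ := mem_NG.1 hbN1
  have hab_ne : ¬ ∃ S ∈ 𝒮, TraceIs S {a, b} := by
    intro hre
    refine three_edges hSS hno (hsubp 1 a h1Y ha6) (hsubp 1 b h1Y hb6) (hsubp a b ha6 hb6)
      (hcdp 1 a (Ne.symm ha1)) (hcdp 1 b (Ne.symm hb1)) (hcdp a b hab)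
      (hpairne 1 a b hab (by simp [ha1, hab])) ?_ ?_
      ⟨1, by simp, by simp⟩ ⟨a, by simp, by simp⟩ ⟨b, by simp, by simp⟩
      hrea hreb hre
    · intro hEq
      have : (1 : ℕ) ∈ ({a, b} : Finset ℕ) := hEq ▸ (by simp)
      rcases Finset.mem_insert.1 this with h | h
      · exact ha1 h.symm
      · rw [Finset.mem_singleton] at h; exact hb1 h.symm
    · intro hEq
      have : (1 : ℕ) ∈ ({a, b} : Finset ℕ) := hEq ▸ (by simp)
      rcases Finset.mem_insert.1 this with h | h
      · exact ha1 h.symm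
      · rw [Finset.mem_singleton] at h; exact hb1 h.symm
  have hbNa : b ∉ NG 𝒮 a := fun h => hab_ne (mem_NG.1 h).2.2
  have haNb : a ∉ NG 𝒮 b := fun h => hab_ne (trace_re_comm (mem_NG.1 h).2.2)
  obtain ⟨a', ha'1, hNa⟩ := other_elem (hN2 a ha6) (NG_symm h1Y haN1)
  obtain ⟨b', hb'1, hNb⟩ := other_elem (hN2 b hb6) (NG_symm h1Y hbN1)
  have ha'Na : a' ∈ NG 𝒮 a := by rw [hNa]; simp
  have hb'Nb : b' ∈ NG 𝒮 b := by rw [hNb]; simp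
  have ha'b : a' ≠ b := fun h => hbNa (h ▸ ha'Na)
  have hb'a : b' ≠ a := fun h => haNb (h ▸ hb'Nb)
  have h1ab : ({1, a, b} : Finset ℕ) ⊆ Y6 := by
    intro z hz
    rcases Finset.mem_insert.1 hz with rfl | hz
    · exact h1Y
    rcases Finset.mem_insert.1 hz with rfl | hz
    · exact ha6
    · rw [Finset.mem_singleton] at hz; subst hz; exact hb6
  have hRc : (Y6 \ ({1, a, b} : Finset ℕ)).card = 3 := by
    rw [Finset.card_sdiff_of_subset h1ab, card_Y6, card_three (Ne.symm ha1) (Ne.symm hb1) hab]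
  have hvex : 0 < ((Y6 \ ({1, a, b} : Finset ℕ)) \ ({a', b'} : Finset ℕ)).card := by
    have h1 := Finset.card_le_card_sdiff_add_card
      (s := Y6 \ ({1, a, b} : Finset ℕ)) (t := ({a', b'} : Finset ℕ))
    have h2 : ({a', b'} : Finset ℕ).card ≤ 2 := by
      refine le_trans (Finset.card_insert_le a' {b'}) ?_
      rw [Finset.card_singleton]
    omega
  obtain ⟨v, hv⟩ := Finset.card_pos.1 hvex
  obtain ⟨hvR, hvab'⟩ := Finset.mem_sdiff.1 hv
  obtain ⟨hv6, hvmem⟩ := Finset.mem_sdiff.1 hvR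
  simp only [Finset.mem_insert, Finset.mem_singleton] at hvmem hvab'
  push_neg at hvmem hvab'
  obtain ⟨hv1, hva, hvb⟩ := hvmem
  obtain ⟨hva', hvb'⟩ := hvab'
  have hNvsub : NG 𝒮 v ⊆ (Y6 \ ({1, a, b} : Finset ℕ)).erase v := by
    intro z hz
    obtain ⟨hz6, hzv, hrez⟩ := mem_NG.1 hz
    have hz1 : z ≠ 1 := by
      intro h
      have : v ∈ NG 𝒮 1 := NG_symm hv6 (h ▸ hz)
      rw [hN1] at this
      rcases Finset.mem_insert.1 this with h | h
      · exact hva h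
      · rw [Finset.mem_singleton] at h; exact hvb h
    have hza : z ≠ a := by
      intro h
      have : v ∈ NG 𝒮 a := NG_symm hv6 (h ▸ hz)
      rw [hNa] at this
      rcases Finset.mem_insert.1 this with h | h
      · exact hv1 h
      · rw [Finset.mem_singleton] at h; exact hva' h
    have hzb : z ≠ b := by
      intro h
      have : v ∈ NG 𝒮 b := NG_symm hv6 (h ▸ hz)
      rw [hNb] at this
      rcases Finset.mem_insert.1 this with h | h
      · exact hv1 h
      · rw [Finset.mem_singleton] at h; exact hvb' h
    refine Finset.mem_erase.2 ⟨hzv, Finset.mem_sdiff.2 ⟨hz6, ?_⟩⟩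
    simp [hz1, hza, hzb]
  have hvRm : v ∈ Y6 \ ({1, a, b} : Finset ℕ) := Finset.mem_sdiff.2 ⟨hv6, by
    simp [hv1, hva, hvb]⟩
  have hNveq : NG 𝒮 v = (Y6 \ ({1, a, b} : Finset ℕ)).erase v := by
    refine Finset.eq_of_subset_of_card_le hNvsub ?_
    rw [Finset.card_erase_of_mem hvRm, hRc, hN2 v hv6]
  obtain ⟨w, hwC, h1B, hvB⟩ := blocked 1 v h1Y hv6 (Ne.symm hv1)
  have hw6 : w ∈ Y6 := hCsub hwC
  have hw1 : w ≠ 1 := by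
    rintro rfl
    exact h1B (Finset.mem_insert_self _ _)
  have hwa : w ≠ a := by
    rintro rfl
    refine h1B (Finset.mem_insert_of_mem ?_)
    rw [hNa]; simp
  have hwb : w ≠ b := by
    rintro rfl
    refine h1B (Finset.mem_insert_of_mem ?_)
    rw [hNb]; simp
  have hwv : w ≠ v := by
    rintro rfl
    exact hvB (Finset.mem_insert_self _ _)
  have hwNv : w ∈ NG 𝒮 v := by
    rw [hNveq]
    exact Finset.mem_erase.2 ⟨hwv, Finset.mem_sdiff.2 ⟨hw6, by simp [hw1, hwa, hwb]⟩⟩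
  exact hvB (Finset.mem_insert_of_mem (NG_symm hv6 hwNv))



end DimThree


section Statement16Witnesses

open Finset

lemma dim_ge_one {n : ℕ} (hn : 1 ≤ n) {𝒮 : Finset (Finset (Finset ℕ))}
    (hSS : IsSplitSystem (Finset.Icc 1 n) 𝒮) : 1 ≤ dimSS 𝒮 := by
  have h1 : (1 : ℕ) ∈ Finset.Icc 1 n := by simp [hn]
  have hT := hSS.2 1 h1
  have : ({({1} : Finset ℕ), Finset.Icc 1 n \ {1}} : Finset (Finset ℕ)) ∈ 𝒮 := hT
  calc (1 : ℕ) = ({({({1} : Finset ℕ), Finset.Icc 1 n \ {1}} : Finset (Finset ℕ))} :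
        Finset (Finset (Finset ℕ))).card := by simp
    _ ≤ dimSS 𝒮 := by
        apply le_dimSS (Finset.singleton_subset_iff.2 this)
        intro S hS T hT' hne
        rw [Finset.mem_singleton] at hS hT'
        exact absurd (hS.trans hT'.symm) hne

lemma dim_ge_two {n : ℕ} (hn : 4 ≤ n) {𝒮 : Finset (Finset (Finset ℕ))}
    (hSS : IsSplitSystem (Finset.Icc 1 n) 𝒮) (hInj : IsInjective (Finset.Icc 1 n) 𝒮) :
    2 ≤ dimSS 𝒮 := by
  have h1 : (1 : ℕ) ∈ Finset.Icc 1 n := by rw [Finset.mem_Icc]; omega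
  have h2 : (2 : ℕ) ∈ Finset.Icc 1 n := by rw [Finset.mem_Icc]; omega
  have h3 : (3 : ℕ) ∈ Finset.Icc 1 n := by rw [Finset.mem_Icc]; omega
  have h4 : (4 : ℕ) ∈ Finset.Icc 1 n := by rw [Finset.mem_Icc]; omega
  obtain ⟨S1, hS1, hsp1, hq1⟩ := U1 hSS hInj h1 h2 h3 h4 (by omega) (by omega) (by omega)
    (by omega) (by omega) (by omega)
  obtain ⟨S2, hS2, hsp2, hq2⟩ := U1 hSS hInj h1 h3 h2 h4 (by omega) (by omega) (by omega)
    (by omega) (by omega) (by omega)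
  obtain ⟨S3, hS3, hsp3, hq3⟩ := U1 hSS hInj h1 h4 h2 h3 (by omega) (by omega) (by omega)
    (by omega) (by omega) (by omega)
  rcases hq1 with h13 | h14
  · rcases hq2 with h12 | h14b
    · exact two_incomp_dim hS1 hS2 (quartet_incomp hsp1 hsp2 h13 h12)
    · exact two_incomp_dim hS1 hS2 (quartet_incomp hsp1 hsp2 (quartet_swap34 h13) h14b)
  · rcases hq2 with h12 | h14b
    · exact two_incomp_dim hS1 hS2 (quartet_incomp hsp1 hsp2 h14 (quartet_swap34 h12))
    · rcases hq3 with h12c | h13c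
      · exact two_incomp_dim hS1 hS3 (quartet_incomp hsp1 hsp3 h14 h12c)
      · exact two_incomp_dim hS1 hS3 (quartet_incomp hsp1 hsp3 (quartet_swap34 h14) h13c)

lemma dim_ge_three {n : ℕ} (hn : 6 ≤ n) {𝒮 : Finset (Finset (Finset ℕ))}
    (hSS : IsSplitSystem (Finset.Icc 1 n) 𝒮) (hInj : IsInjective (Finset.Icc 1 n) 𝒮) :
    3 ≤ dimSS 𝒮 := by
  by_contra hcon
  have hno : ∀ S1 ∈ 𝒮, ∀ S2 ∈ 𝒮, ∀ S3 ∈ 𝒮,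
      ¬(Incompatible S1 S2 ∧ Incompatible S1 S3 ∧ Incompatible S2 S3) := by
    rintro S1 h1 S2 h2 S3 h3 ⟨ha, hb, hc⟩
    exact hcon (three_incomp_dim h1 h2 h3 ha hb hc)
  by_cases hA : ∃ P, P ⊆ Y6 ∧ P.card = 3 ∧ ∃ S ∈ 𝒮, TraceIs S P
  · obtain ⟨P, hP6, hPc, hreP⟩ := hA
    by_cases hB : ∃ R, R ⊆ Y6 ∧ R.card = 3 ∧ (∃ S ∈ 𝒮, TraceIs S R) ∧ R ≠ P ∧ R ≠ Y6 \ P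
    · obtain ⟨R, hR6, hRc, hreR, hRP, hRP'⟩ := hB
      exact case_III hn hSS hInj hno hP6 hPc hR6 hRc hRP hRP' hreP hreR
    · push_neg at hB
      refine case_II hn hSS hInj hno hP6 hPc hreP ?_
      intro R hR6 hRc hreR
      by_cases hRP : R = P
      · exact Or.inl hRP
      · exact Or.inr (hB R hR6 hRc hreR hRP)
  · push_neg at hA
    refine case_I hn hSS hInj hno ?_
    rintro R h1 h2 ⟨S, hS, htr⟩
    exact hA R h1 h2 S hS htr

def F3 : Finset (Finset ℕ) := {{1},{2},{3}}
def F4 : Finset (Finset ℕ) := {{1,2},{1,3},{1},{2},{3},{4}}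
def F5 : Finset (Finset ℕ) := {{1,2},{2,3},{3,4},{4,5},{1,5},{1},{2},{3},{4},{5}}
def F6 : Finset (Finset ℕ) :=
  {{1,4,6},{1,2,6},{1,4,5},{1,2},{3,4},{2,5},{4,6},{1},{2},{3},{4},{5},{6}}
def F7 : Finset (Finset ℕ) :=
  {{4,5,7},{2,6,7},{1,2,5},{3,6,7},{2,3,6},{1,3,4},{6,7},{1,3},{4,7},{2,5},{3,7},
   {1},{2},{3},{4},{5},{6},{7}}
def F8 : Finset (Finset ℕ) :=
  {{1,6,7,8},{1,2,4,6},{1,2,5,8},{3,6,7},{1,2,8},{5,7,8},{1,4,6},{1,6,8},{2,3,5},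
   {1,4},{2,5},{6,7},{5,8},{1,8},{2,4},{3,5},{1},{2},{3},{4},{5},{6},{7},{8}}

set_option maxRecDepth 100000 in
set_option maxHeartbeats 2000000 in
lemma ID3 : ID 3 = 1 := by
  refine ID_eq_of (witness_pack (F := F3) le_rfl (by decide) (by decide) (by decide) ?_)
    (fun 𝒮 h1 _ => dim_ge_one (by omega) h1)
  intro 𝒯 hsub _
  have he : NTF 3 F3 = ∅ := by decide
  rw [he, Finset.subset_empty] at hsub
  simp [hsub]

set_option maxRecDepth 100000 in
set_option maxHeartbeats 2000000 in
lemma ID4 : ID 4 = 2 := by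
  refine ID_eq_of (witness_pack (F := F4) (by omega) (by decide) (by decide) (by decide)
    (no_three_pairwise (by decide)))
    (fun 𝒮 h1 h2 => dim_ge_two (by omega) h1 h2)

set_option maxRecDepth 100000 in
set_option maxHeartbeats 2000000 in
lemma ID5 : ID 5 = 2 := by
  refine ID_eq_of (witness_pack (F := F5) (by omega) (by decide) (by decide) (by decide)
    (no_three_pairwise (by decide)))
    (fun 𝒮 h1 h2 => dim_ge_two (by omega) h1 h2)

set_option maxRecDepth 100000 in
set_option maxHeartbeats 4000000 in
lemma ID6 : ID 6 = 3 := by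
  refine ID_eq_of (witness_pack (F := F6) (by omega) (by decide) (by decide) (by decide)
    (no_four_pairwise (by decide)))
    (fun 𝒮 h1 h2 => dim_ge_three (by omega) h1 h2)

set_option maxRecDepth 100000 in
set_option maxHeartbeats 8000000 in
lemma ID7 : ID 7 = 3 := by
  refine ID_eq_of (witness_pack (F := F7) (by omega) (by decide) (by decide) (by decide)
    (no_four_pairwise (by decide)))
    (fun 𝒮 h1 h2 => dim_ge_three (by omega) h1 h2)

set_option maxRecDepth 1000000 in
set_option maxHeartbeats 16000000 in
lemma ID8 : ID 8 = 3 := by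
  refine ID_eq_of (witness_pack (F := F8) (by omega) (by decide) (by decide) (by decide)
    (no_four_pairwise (by decide)))
    (fun 𝒮 h1 h2 => dim_ge_three (by omega) h1 h2)

/-- the system of all trivial and all 2-element splits, injective for any `n ≥ 5`. -/
lemma exists_injective (n : ℕ) (hn : 5 ≤ n) :
    ∃ 𝒮 : Finset (Finset (Finset ℕ)), IsSplitSystem (Finset.Icc 1 n) 𝒮 ∧
      IsInjective (Finset.Icc 1 n) 𝒮 := by
  set X := Finset.Icc 1 n with hX
  have hcX : X.card = n := by simp [hX]
  refine ⟨((X.powersetCard 1 ∪ X.powersetCard 2).image (mkS X)), ?_, ?_⟩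
  · constructor
    · intro S hS
      obtain ⟨A, hA, rfl⟩ := Finset.mem_image.1 hS
      rw [Finset.mem_union, Finset.mem_powersetCard, Finset.mem_powersetCard] at hA
      have hsub : A ⊆ X := by rcases hA with h | h <;> exact h.1
      have hcard : A.card = 1 ∨ A.card = 2 := by rcases hA with h | h <;> [left; right] <;> exact h.2
      refine isSplit_mkS hsub ?_ ?_
      · intro he; rw [he] at hcard; simp at hcard
      · intro he
        have h1 : (X \ A).card = n - A.card := by rw [Finset.card_sdiff_of_subset hsub, hcX]
        rw [he] at h1
        simp only [Finset.card_empty] at h1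
        omega
    · intro x hx
      refine Finset.mem_image_of_mem _ (Finset.mem_union_left _ ?_)
      rw [Finset.mem_powersetCard]
      exact ⟨Finset.singleton_subset_iff.2 hx, Finset.card_singleton x⟩
  · intro Y Y' hY hY' hcY hcY' hne
    have hYY' : ¬ Y ⊆ Y' := fun hss =>
      hne (Finset.eq_of_subset_of_card_le hss (le_of_eq (hcY'.trans hcY.symm)))
    obtain ⟨x, hxY, hxY'⟩ := Finset.not_subset.1 hYY'
    have hYe : 2 ≤ (Y.erase x).card := by rw [Finset.card_erase_of_mem hxY, hcY]
    obtain ⟨y, hy⟩ := (Finset.card_pos (s := Y.erase x)).1 (by omega)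
    have hyY := (Finset.mem_erase.1 hy).2
    have hyx := (Finset.mem_erase.1 hy).1
    have hxy2 : ({x, y} : Finset ℕ).card = 2 := by
      rw [Finset.card_insert_of_notMem (by simp [Ne.symm hyx]), Finset.card_singleton]
    have hxyX : ({x, y} : Finset ℕ) ⊆ X := by
      intro z hz
      rcases Finset.mem_insert.1 hz with rfl | hz
      · exact hY hxY
      · rw [Finset.mem_singleton] at hz; subst hz; exact hY hyY
    refine ⟨mkS X {x, y}, Finset.mem_image_of_mem _ (Finset.mem_union_right _ ?_), ?_⟩
    · rw [Finset.mem_powersetCard]; exact ⟨hxyX, hxy2⟩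
    · refine ⟨{x, y}, Finset.mem_insert_self _ _, X \ {x, y},
        Finset.mem_insert_of_mem (Finset.mem_singleton_self _), ?_, ?_, ?_⟩
      · intro he
        have : x ∈ X \ ({x, y} : Finset ℕ) := he ▸ Finset.mem_insert_self x {y}
        simp at this
      · have : Y ∩ {x, y} = {x, y} := Finset.inter_eq_right.2 (by
          intro z hz
          rcases Finset.mem_insert.1 hz with rfl | hz
          · exact hxY
          · rw [Finset.mem_singleton] at hz; subst hz; exact hyY)
        rw [this, hxy2]
      · have hsub2 : Y'.erase y ⊆ Y' ∩ (X \ {x, y}) := by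
          intro z hz
          have hzY' := (Finset.mem_erase.1 hz).2
          have hzy := (Finset.mem_erase.1 hz).1
          have hzx : z ≠ x := fun he => hxY' (he ▸ hzY')
          refine Finset.mem_inter.2 ⟨hzY', Finset.mem_sdiff.2 ⟨hY' hzY', ?_⟩⟩
          simp [hzx, hzy]
        refine le_trans ?_ (Finset.card_le_card hsub2)
        by_cases hyY' : y ∈ Y'
        · rw [Finset.card_erase_of_mem hyY', hcY']
        · rw [Finset.erase_eq_of_notMem hyY', hcY']; omega

lemma ID_ge_three {n : ℕ} (hn : 9 ≤ n) : 3 ≤ ID n :=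
  ID_ge_of (exists_injective n (by omega)) (fun 𝒮 h1 h2 => dim_ge_three (by omega) h1 h2)

end Statement16Witnesses


/-- `ID(3) = 1`, `ID(4) = ID(5) = 2`, `ID(6) = ID(7) = ID(8) = 3`,
and `ID(n) ≥ 3` for all `n ≥ 9`. -/
theorem statement16 :
    ID 3 = 1 ∧ ID 4 = 2 ∧ ID 5 = 2 ∧ ID 6 = 3 ∧ ID 7 = 3 ∧ ID 8 = 3 ∧
    ∀ n : ℕ, 9 ≤ n → 3 ≤ ID n :=
  ⟨ID3, ID4, ID5, ID6, ID7, ID8, fun _ hn => ID_ge_three hn⟩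

end InjectiveSplitSystems
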